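/- arXiv:1002.1104 — 2 statements merged into one kernel-verified Lean document; each statement's English description precedes it below -/
import Mathlib

section
/- Let λ = E[Q̂_{k,s}] < ∞ and let U be a Poisson random variable with mean λ. Then the variation distance between the law of Q̂_{k,s} and the law of U satisfies sup_{A ⊆ ℕ} |Pr(Q̂_{k,s} ∈ A) − Pr(U ∈ A)| ≤ b_1(s) + b_2(s). -/
open MeasureTheory ProbabilityTheory Finset Filter Asymptotics

noncomputable section

namespace PaperModel

variable {Ω : Type*}

/-- Support of itemset `X` in the dataset given by the Bernoulli family `A`. -/
def support {n t : ℕ} (A : Fin t → Fin n → Ω → Bool) (X : Finset (Fin n)) (ω : Ω) : ℕ :=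
  (Finset.univ.filter fun j => ∀ i ∈ X, A j i ω = true).card

/-- Indicator `Z_X` of the event that the support of `X` is at least `s`. -/
def Z {n t : ℕ} (A : Fin t → Fin n → Ω → Bool) (s : ℕ) (X : Finset (Fin n)) (ω : Ω) : ℝ :=
  if s ≤ support A X ω then 1 else 0

/-- `Q̂_{k,s}`: the number of `k`-itemsets with support at least `s`. -/
def Qhat {n t : ℕ} (A : Fin t → Fin n → Ω → Bool) (k s : ℕ) (ω : Ω) : ℕ :=
  ((Finset.univ.powersetCard k).filter fun X => s ≤ support A X ω).card

/-- `p_X = Pr(Z_X = 1)`. -/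
def pX [MeasurableSpace Ω] (μ : Measure Ω) {n t : ℕ} (A : Fin t → Fin n → Ω → Bool)
    (s : ℕ) (X : Finset (Fin n)) : ℝ :=
  (μ {ω | s ≤ support A X ω}).toReal

/-- `E[Z_X Z_Y] = Pr(Z_X = 1 ∧ Z_Y = 1)`. -/
def pXY [MeasurableSpace Ω] (μ : Measure Ω) {n t : ℕ} (A : Fin t → Fin n → Ω → Bool)
    (s : ℕ) (X Y : Finset (Fin n)) : ℝ :=
  (μ ({ω | s ≤ support A X ω} ∩ {ω | s ≤ support A Y ω})).toReal

/-- `b_1(s) = Σ_{|X|=k} Σ_{Y ∈ I(X)} p_X p_Y`. -/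
def b1 [MeasurableSpace Ω] (μ : Measure Ω) {n t : ℕ} (A : Fin t → Fin n → Ω → Bool)
    (k s : ℕ) : ℝ :=
  ∑ X ∈ Finset.univ.powersetCard k,
    ∑ Y ∈ (Finset.univ.powersetCard k).filter (fun Y => Y ∩ X ≠ ∅),
      pX μ A s X * pX μ A s Y

/-- `b_2(s) = Σ_{|X|=k} Σ_{X ≠ Y ∈ I(X)} E[Z_X Z_Y]`. -/
def b2 [MeasurableSpace Ω] (μ : Measure Ω) {n t : ℕ} (A : Fin t → Fin n → Ω → Bool)
    (k s : ℕ) : ℝ :=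
  ∑ X ∈ Finset.univ.powersetCard k,
    ∑ Y ∈ (Finset.univ.powersetCard k).filter (fun Y => Y ∩ X ≠ ∅ ∧ Y ≠ X),
      pXY μ A s X Y

/-- Probability that a Poisson random variable with mean `lam` lands in `S ⊆ ℕ`. -/
def poissonProb (lam : ℝ) (S : Set ℕ) : ℝ :=
  ∑' j : S, Real.exp (-lam) * lam ^ (j : ℕ) / (Nat.factorial (j : ℕ) : ℝ)
/-- Poisson pmf. -/
def pois (lam : ℝ) (j : ℕ) : ℝ := Real.exp (-lam) * lam ^ j / (Nat.factorial j : ℝ)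

lemma poissonProb_eq (lam : ℝ) (S : Set ℕ) :
    poissonProb lam S = ∑' j : S, pois lam (j : ℕ) := rfl

lemma expSum (x : ℝ) : ∑' n : ℕ, x ^ n / (Nat.factorial n : ℝ) = Real.exp x := by
  rw [Real.exp_eq_exp_ℝ, NormedSpace.exp_eq_tsum_div]

lemma summable_expSeries (x : ℝ) : Summable (fun n : ℕ => x ^ n / (Nat.factorial n : ℝ)) :=
  Real.summable_pow_div_factorial x

lemma pois_nonneg {lam : ℝ} (h : 0 ≤ lam) (j : ℕ) : 0 ≤ pois lam j := by
  unfold pois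
  positivity

lemma summable_pois (lam : ℝ) : Summable (pois lam) := by
  have := (summable_expSeries lam).mul_left (Real.exp (-lam))
  refine this.congr fun j => ?_
  rw [pois, mul_div_assoc]

lemma tsum_pois {lam : ℝ} : ∑' j, pois lam j = 1 := by
  have : ∑' j, pois lam j = Real.exp (-lam) * ∑' n : ℕ, lam ^ n / (Nat.factorial n : ℝ) := by
    rw [← Summable.tsum_mul_left _ (summable_expSeries lam)]
    exact tsum_congr fun j => by rw [pois, mul_div_assoc]
  rw [this, expSum, ← Real.exp_add]
  simp

/-- Partial sum of the exponential series. -/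
def Ppart (lam : ℝ) (j : ℕ) : ℝ := ∑ i ∈ Finset.range (j + 1), lam ^ i / (Nat.factorial i : ℝ)

def uaux (lam : ℝ) (j : ℕ) : ℝ := (Nat.factorial j : ℝ) / lam ^ (j + 1) * Ppart lam j

def vaux (lam : ℝ) (j : ℕ) : ℝ :=
  ∑' r : ℕ, (Nat.factorial j : ℝ) * lam ^ r / (Nat.factorial (j + 1 + r) : ℝ)

lemma Ppart_nonneg {lam : ℝ} (h : 0 ≤ lam) (j : ℕ) : 0 ≤ Ppart lam j :=
  Finset.sum_nonneg fun i _ => by positivity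

lemma uaux_nonneg {lam : ℝ} (h : 0 ≤ lam) (j : ℕ) : 0 ≤ uaux lam j := by
  have := Ppart_nonneg h j
  unfold uaux
  positivity

lemma summable_vaux_term {lam : ℝ} (h : 0 ≤ lam) (j : ℕ) :
    Summable (fun r : ℕ => (Nat.factorial j : ℝ) * lam ^ r / (Nat.factorial (j + 1 + r) : ℝ)) := by
  refine Summable.of_nonneg_of_le (fun r => by positivity) (fun r => ?_)
    (Real.summable_pow_div_factorial lam)
  rw [div_le_div_iff₀ (by positivity) (by positivity)]
  have hfac : (Nat.factorial j : ℝ) * (Nat.factorial r : ℝ) ≤ (Nat.factorial (j + 1 + r) : ℝ) := by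
    have h1 : Nat.factorial j * Nat.factorial r ∣ Nat.factorial (j + r) :=
      Nat.factorial_mul_factorial_dvd_factorial_add j r
    have h2 : Nat.factorial (j + r) ≤ Nat.factorial (j + 1 + r) :=
      Nat.factorial_le (by omega)
    have := Nat.le_of_dvd (Nat.factorial_pos _) h1
    exact_mod_cast le_trans this h2
  calc (Nat.factorial j : ℝ) * lam ^ r * (Nat.factorial r : ℝ)
      = lam ^ r * ((Nat.factorial j : ℝ) * (Nat.factorial r : ℝ)) := by ring
    _ ≤ lam ^ r * (Nat.factorial (j + 1 + r) : ℝ) := by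
        apply mul_le_mul_of_nonneg_left hfac (by positivity)
    _ = lam ^ r * (Nat.factorial (j + 1 + r) : ℝ) := rfl

lemma vaux_nonneg {lam : ℝ} (h : 0 ≤ lam) (j : ℕ) : 0 ≤ vaux lam j :=
  tsum_nonneg fun r => by positivity

/-- Recurrence for `u`. -/
lemma uaux_rec {lam : ℝ} (h : 0 < lam) (j : ℕ) :
    uaux lam (j + 1) = (1 + (j + 1 : ℝ) * uaux lam j) / lam := by
  have hl : lam ≠ 0 := ne_of_gt h
  have hP : Ppart lam (j+1) = Ppart lam j + lam ^ (j+1) / (Nat.factorial (j+1) : ℝ) := by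
    unfold Ppart
    rw [Finset.sum_range_succ]
  have hfact : (Nat.factorial (j+1) : ℝ) = (j+1 : ℝ) * (Nat.factorial j : ℝ) := by
    rw [Nat.factorial_succ]; push_cast; ring
  unfold uaux
  rw [hP, hfact]
  have hfj : (Nat.factorial j : ℝ) ≠ 0 := by exact_mod_cast Nat.factorial_ne_zero j
  have hj1 : (j + 1 : ℝ) ≠ 0 := by positivity
  field_simp
  ring

/-- Recurrence for `v`: `(j+1) v j = 1 + lam * v (j+1)`. -/
lemma vaux_rec {lam : ℝ} (h : 0 ≤ lam) (j : ℕ) :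
    (j + 1 : ℝ) * vaux lam j = 1 + lam * vaux lam (j + 1) := by
  have hsum := summable_vaux_term h j
  have h0 : vaux lam j = (Nat.factorial j : ℝ) * lam ^ 0 / (Nat.factorial (j+1+0) : ℝ)
      + ∑' r : ℕ, (Nat.factorial j : ℝ) * lam ^ (r+1) / (Nat.factorial (j+1+(r+1)) : ℝ) := by
    exact Summable.tsum_eq_zero_add hsum
  have hshift : ∑' r : ℕ, (Nat.factorial j : ℝ) * lam ^ (r+1) / (Nat.factorial (j+1+(r+1)) : ℝ)
      = (lam / (j+1 : ℝ)) * vaux lam (j+1) := by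
    rw [vaux, ← Summable.tsum_mul_left _ (summable_vaux_term h (j+1))]
    apply tsum_congr fun r => ?_
    have hfact : (Nat.factorial (j+1) : ℝ) = (j+1 : ℝ) * (Nat.factorial j : ℝ) := by
      rw [Nat.factorial_succ]; push_cast; ring
    have hidx : j + 1 + (r + 1) = (j + 1) + 1 + r := by omega
    rw [hidx, pow_succ]
    have hj1 : (j + 1 : ℝ) ≠ 0 := by positivity
    field_simp [hfact]
    rw [hfact]; ring
  have hfac0 : (Nat.factorial j : ℝ) * lam ^ 0 / (Nat.factorial (j+1+0) : ℝ) = 1 / (j+1 : ℝ) := by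
    simp only [pow_zero, mul_one, Nat.add_zero]
    rw [Nat.factorial_succ]
    push_cast
    have hfj : (Nat.factorial j : ℝ) ≠ 0 := by exact_mod_cast Nat.factorial_ne_zero j
    field_simp
  rw [h0, hshift, hfac0]
  have hj1 : (j + 1 : ℝ) ≠ 0 := by positivity
  field_simp

lemma uaux_mono {lam : ℝ} (h : 0 < lam) (j : ℕ) : uaux lam j ≤ uaux lam (j + 1) := by
  have key : lam * Ppart lam j ≤ (j + 1 : ℝ) * Ppart lam (j + 1) := by
    have h1 : lam * Ppart lam j = ∑ i ∈ Finset.range (j+1), lam ^ (i+1) / (Nat.factorial i : ℝ) := by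
      rw [Ppart, Finset.mul_sum]
      exact Finset.sum_congr rfl fun i _ => by rw [pow_succ]; ring
    have h2 : ∑ i ∈ Finset.range (j+1), lam ^ (i+1) / (Nat.factorial i : ℝ)
        ≤ ∑ i ∈ Finset.range (j+1), (j+1 : ℝ) * (lam ^ (i+1) / (Nat.factorial (i+1) : ℝ)) := by
      refine Finset.sum_le_sum fun i hi => ?_
      have hij : i + 1 ≤ j + 1 := by
        have := Finset.mem_range.mp hi; omega
      have hfac : (Nat.factorial (i+1) : ℝ) = (i+1 : ℝ) * (Nat.factorial i : ℝ) := by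
        rw [Nat.factorial_succ]; push_cast; ring
      rw [hfac]
      have hxf : 0 ≤ lam ^ (i+1) / (Nat.factorial i : ℝ) := by positivity
      have hfi : (Nat.factorial i : ℝ) ≠ 0 := by exact_mod_cast Nat.factorial_ne_zero i
      have hrw : (j+1:ℝ) * (lam ^ (i+1) / ((i+1 : ℝ) * (Nat.factorial i : ℝ)))
          = ((j+1:ℝ)/((i:ℝ)+1)) * (lam ^ (i+1) / (Nat.factorial i : ℝ)) := by
        have hi1 : ((i:ℝ)+1) ≠ 0 := by positivity
        field_simp
      rw [hrw]
      refine le_mul_of_one_le_left hxf ?_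
      rw [le_div_iff₀ (by positivity)]
      have : (i:ℝ) + 1 ≤ (j:ℝ) + 1 := by exact_mod_cast hij
      linarith
    have h3 : ∑ i ∈ Finset.range (j+1), (j+1 : ℝ) * (lam ^ (i+1) / (Nat.factorial (i+1) : ℝ))
        ≤ (j+1 : ℝ) * Ppart lam (j+1) := by
      rw [← Finset.mul_sum]
      apply mul_le_mul_of_nonneg_left _ (by positivity)
      have hsplit : Ppart lam (j+1) = (∑ i ∈ Finset.range (j+1), lam ^ (i+1) / (Nat.factorial (i+1) : ℝ)) + lam ^ 0 / (Nat.factorial 0 : ℝ) := by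
        rw [Ppart]
        exact Finset.sum_range_succ' _ (j+1)
      rw [hsplit]
      simp
    exact le_trans (le_of_eq h1) (le_trans h2 h3)
  have hfj : (0:ℝ) < (Nat.factorial j : ℝ) := by exact_mod_cast Nat.factorial_pos j
  have hP : 0 ≤ Ppart lam j := Finset.sum_nonneg fun i _ => by positivity
  unfold uaux
  have hfac : (Nat.factorial (j+1) : ℝ) = (j+1 : ℝ) * (Nat.factorial j : ℝ) := by
    rw [Nat.factorial_succ]; push_cast; ring
  rw [hfac]
  rw [div_mul_eq_mul_div, div_mul_eq_mul_div, div_le_div_iff₀ (by positivity) (by positivity)]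
  have : lam ^ (j+1+1) = lam ^ (j+1) * lam := by rw [pow_succ]
  rw [this]
  calc (Nat.factorial j : ℝ) * Ppart lam j * (lam ^ (j+1) * lam)
      = ((Nat.factorial j : ℝ) * lam ^ (j+1)) * (lam * Ppart lam j) := by ring
    _ ≤ ((Nat.factorial j : ℝ) * lam ^ (j+1)) * ((j+1:ℝ) * Ppart lam (j+1)) := by
        apply mul_le_mul_of_nonneg_left key (by positivity)
    _ = (j+1 : ℝ) * (Nat.factorial j : ℝ) * Ppart lam (j+1) * lam ^ (j+1) := by ring

lemma vaux_anti {lam : ℝ} (h : 0 ≤ lam) (j : ℕ) : vaux lam (j + 1) ≤ vaux lam j := by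
  refine Summable.tsum_le_tsum (fun r => ?_) (summable_vaux_term h (j+1)) (summable_vaux_term h j)
  have hf1 : (Nat.factorial (j+1) : ℝ) = (j+1 : ℝ) * (Nat.factorial j : ℝ) := by
    rw [Nat.factorial_succ]; push_cast; ring
  have hidx : j + 1 + 1 + r = (j + 1 + r) + 1 := by omega
  have hf2 : (Nat.factorial (j+1+1+r) : ℝ) = (j+1+r+1 : ℝ) * (Nat.factorial (j+1+r) : ℝ) := by
    rw [hidx, Nat.factorial_succ]; push_cast; ring
  rw [hf1, hf2, div_le_div_iff₀ (by positivity) (by positivity)]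
  have hfj : (0:ℝ) ≤ (Nat.factorial j : ℝ) := by positivity
  have hfjr : (0:ℝ) ≤ (Nat.factorial (j+1+r) : ℝ) := by positivity
  have hle : (j + 1 : ℝ) ≤ (j + 1 + r + 1 : ℝ) := by push_cast; linarith [Nat.cast_nonneg (α := ℝ) r]
  have hlam : 0 ≤ lam ^ r := by positivity
  nlinarith [mul_nonneg (mul_nonneg hfj hlam) hfjr]

lemma summable_expShift (lam : ℝ) (h : 0 ≤ lam) :
    Summable (fun r : ℕ => lam ^ r / (Nat.factorial (r + 1) : ℝ)) := by
  refine Summable.of_nonneg_of_le (fun r => by positivity) (fun r => ?_) (summable_expSeries lam)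
  rw [div_le_div_iff₀ (by positivity) (by positivity)]
  have hle : (Nat.factorial r : ℝ) ≤ (Nat.factorial (r+1) : ℝ) := by
    exact_mod_cast Nat.factorial_le (by omega)
  exact mul_le_mul_of_nonneg_left hle (by positivity)

lemma pois_vaux_eq {lam : ℝ} (j : ℕ) :
    pois lam j * vaux lam j
      = Real.exp (-lam) * ∑' r : ℕ, lam ^ (j + r) / (Nat.factorial (j + 1 + r) : ℝ) := by
  rw [vaux, ← tsum_mul_left, ← tsum_mul_left]
  refine tsum_congr fun r => ?_
  rw [pois, pow_add]
  have hfj : (Nat.factorial j : ℝ) ≠ 0 := by exact_mod_cast Nat.factorial_ne_zero j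
  have hfr : (Nat.factorial (j+1+r) : ℝ) ≠ 0 := by exact_mod_cast Nat.factorial_ne_zero _
  field_simp

lemma tail_eq {lam : ℝ} (h : lam ≠ 0) :
    (1 - Real.exp (-lam)) / lam
      = Real.exp (-lam) * ∑' r : ℕ, lam ^ r / (Nat.factorial (r + 1) : ℝ) := by
  have h0 : Real.exp lam = 1 + ∑' r : ℕ, lam ^ (r+1) / (Nat.factorial (r+1) : ℝ) := by
    rw [← expSum lam, Summable.tsum_eq_zero_add (summable_expSeries lam)]
    norm_num
  have h1 : ∑' r : ℕ, lam ^ (r+1) / (Nat.factorial (r+1) : ℝ)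
      = lam * ∑' r : ℕ, lam ^ r / (Nat.factorial (r+1) : ℝ) := by
    rw [← tsum_mul_left]
    exact tsum_congr fun r => by rw [pow_succ]; ring
  rw [div_eq_iff h]
  have hexp : Real.exp (-lam) * Real.exp lam = 1 := by
    rw [← Real.exp_add]; simp
  calc 1 - Real.exp (-lam) = Real.exp (-lam) * (Real.exp lam - 1) := by
        rw [mul_sub, hexp]; ring
    _ = Real.exp (-lam) * (lam * ∑' r : ℕ, lam ^ r / (Nat.factorial (r+1) : ℝ)) := by
        rw [h0, h1]; ring
    _ = Real.exp (-lam) * (∑' r : ℕ, lam ^ r / (Nat.factorial (r+1) : ℝ)) * lam := by ring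

lemma djj_bound0 {lam : ℝ} (h : 0 < lam) :
    pois lam 0 * vaux lam 0 ≤ (1 - Real.exp (-lam)) / lam := by
  rw [pois_vaux_eq 0, tail_eq h.ne']
  apply le_of_eq
  congr 1
  exact tsum_congr fun r => by norm_num [Nat.add_comm 1 r]

lemma djj_bound {lam : ℝ} (h : 0 < lam) (j : ℕ) :
    pois lam (j+1) * vaux lam (j+1) + Real.exp (-lam) / ((j:ℝ)+1) * Ppart lam j
      ≤ (1 - Real.exp (-lam)) / lam := by
  rw [pois_vaux_eq (j+1), tail_eq h.ne']
  have hsplit : ∑' r : ℕ, lam ^ r / (Nat.factorial (r + 1) : ℝ)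
      = (∑ r ∈ Finset.range (j+1), lam ^ r / (Nat.factorial (r+1) : ℝ))
        + ∑' r : ℕ, lam ^ (r + (j+1)) / (Nat.factorial (r + (j+1) + 1) : ℝ) :=
    (Summable.sum_add_tsum_nat_add (j+1) (summable_expShift lam h.le)).symm
  rw [hsplit, mul_add]
  have htail : Real.exp (-lam) * ∑' r : ℕ, lam ^ (j + 1 + r) / (Nat.factorial (j + 1 + 1 + r) : ℝ)
      = Real.exp (-lam) * ∑' r : ℕ, lam ^ (r + (j+1)) / (Nat.factorial (r + (j+1) + 1) : ℝ) := by
    congr 1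
    refine tsum_congr fun r => ?_
    have h1 : j + 1 + r = r + (j + 1) := by omega
    have h2 : j + 1 + 1 + r = r + (j + 1) + 1 := by omega
    rw [h1, h2]
  have hkey : Ppart lam j / ((j:ℝ)+1) ≤ ∑ r ∈ Finset.range (j+1), lam ^ r / (Nat.factorial (r+1) : ℝ) := by
    rw [Ppart, Finset.sum_div]
    refine Finset.sum_le_sum fun i hi => ?_
    rw [div_div, div_le_div_iff₀ (by positivity) (by positivity)]
    have hij : i + 1 ≤ j + 1 := by have := Finset.mem_range.mp hi; omega
    have hfac : (Nat.factorial (i+1) : ℝ) = ((i:ℝ)+1) * (Nat.factorial i : ℝ) := by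
      rw [Nat.factorial_succ]; push_cast; ring
    have hle : (Nat.factorial (i+1) : ℝ) ≤ (Nat.factorial i : ℝ) * ((j:ℝ)+1) := by
      rw [hfac]
      have hcast : ((i:ℝ)+1) ≤ ((j:ℝ)+1) := by exact_mod_cast hij
      have hfi : (0:ℝ) ≤ (Nat.factorial i : ℝ) := by positivity
      nlinarith
    exact mul_le_mul_of_nonneg_left hle (by positivity)
  have hhead : Real.exp (-lam) / ((j:ℝ)+1) * Ppart lam j
      ≤ Real.exp (-lam) * ∑ r ∈ Finset.range (j+1), lam ^ r / (Nat.factorial (r+1) : ℝ) := by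
    have hrw : Real.exp (-lam) / ((j:ℝ)+1) * Ppart lam j
        = Real.exp (-lam) * (Ppart lam j / ((j:ℝ)+1)) := by ring
    rw [hrw]
    exact mul_le_mul_of_nonneg_left hkey (Real.exp_nonneg _)
  linarith [htail, hhead]

lemma switch_id {lam : ℝ} (h : 0 < lam) (j : ℕ) :
    pois lam (j+1) * (lam * vaux lam (j+1)) + Real.exp (-lam) * Ppart lam j + pois lam (j+1)
      = 1 := by
  have hterm : pois lam (j+1) * (lam * vaux lam (j+1))
      = Real.exp (-lam) * ∑' r : ℕ, lam ^ (r + (j+2)) / (Nat.factorial (r + (j+2)) : ℝ) := by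
    rw [vaux, ← tsum_mul_left, ← tsum_mul_left, ← tsum_mul_left]
    refine tsum_congr fun r => ?_
    rw [pois]
    have h1 : r + (j + 2) = (j + 2) + r := by omega
    rw [h1, pow_add]
    have hf1 : (Nat.factorial (j+1) : ℝ) ≠ 0 := by exact_mod_cast Nat.factorial_ne_zero _
    have h2 : j + 1 + 1 + r = j + 2 + r := by omega
    rw [h2]
    have hf2 : (Nat.factorial (j+2+r) : ℝ) ≠ 0 := by exact_mod_cast Nat.factorial_ne_zero _
    field_simp
    ring
  have hPP : Ppart lam (j+1) = Ppart lam j + lam ^ (j+1) / (Nat.factorial (j+1) : ℝ) := by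
    rw [Ppart, Ppart, Finset.sum_range_succ]
  have hP : Real.exp (-lam) * Ppart lam j + pois lam (j+1)
      = Real.exp (-lam) * Ppart lam (j+1) := by
    rw [hPP, pois]
    ring
  rw [hterm]
  rw [add_assoc, hP]  -- careful with assoc
  have hfull : Ppart lam (j+1) + ∑' r : ℕ, lam ^ (r + (j+2)) / (Nat.factorial (r + (j+2)) : ℝ)
      = Real.exp lam := by
    rw [← expSum lam, Ppart]
    exact Summable.sum_add_tsum_nat_add (j+2) (summable_expSeries lam)
  calc Real.exp (-lam) * (∑' r : ℕ, lam ^ (r + (j+2)) / (Nat.factorial (r + (j+2)) : ℝ))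
        + Real.exp (-lam) * Ppart lam (j+1)
      = Real.exp (-lam) * (Ppart lam (j+1) + ∑' r : ℕ, lam ^ (r + (j+2)) / (Nat.factorial (r + (j+2)) : ℝ)) := by ring
    _ = Real.exp (-lam) * Real.exp lam := by rw [hfull]
    _ = 1 := by rw [← Real.exp_add]; simp

lemma stein_factor_le_one {lam : ℝ} (h : 0 < lam) :
    (1 - Real.exp (-lam)) / lam ≤ 1 := by
  rw [div_le_one h]
  have := Real.add_one_le_exp (-lam)
  linarith

open Classical in
/-- Solution of the Stein equation for Poisson approximation. -/
def steinF (lam : ℝ) (S : Set ℕ) : ℕ → ℝ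
  | 0 => 0
  | (j+1) => ((if j ∈ S then (1:ℝ) else 0) - poissonProb lam S + (j : ℝ) * steinF lam S j) / lam

open Classical in
lemma steinF_succ (lam : ℝ) (S : Set ℕ) (j : ℕ) :
    steinF lam S (j+1)
      = ((if j ∈ S then (1:ℝ) else 0) - poissonProb lam S + (j : ℝ) * steinF lam S j) / lam :=
  rfl

lemma poissonProb_singleton (lam : ℝ) (m : ℕ) : poissonProb lam ({m} : Set ℕ) = pois lam m := by
  rw [poissonProb_eq]
  exact tsum_singleton m (fun j => pois lam j)

lemma pois_uaux {lam : ℝ} (h : 0 < lam) (j : ℕ) :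
    ((j:ℝ)+1) * pois lam (j+1) * uaux lam j = Real.exp (-lam) * Ppart lam j := by
  rw [pois, uaux]
  have hfac : (Nat.factorial (j+1) : ℝ) = ((j:ℝ)+1) * (Nat.factorial j : ℝ) := by
    rw [Nat.factorial_succ]; push_cast; ring
  have hfj : (Nat.factorial j : ℝ) ≠ 0 := by exact_mod_cast Nat.factorial_ne_zero j
  have hl : lam ^ (j+1) ≠ 0 := by positivity
  rw [hfac]
  field_simp

open Classical in
lemma steinF_single {lam : ℝ} (h : 0 < lam) (m : ℕ) :
    ∀ j : ℕ, steinF lam {m} (j+1)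
      = if j < m then -(pois lam m * uaux lam j) else pois lam m * vaux lam j := by
  intro j
  induction j with
  | zero =>
    rw [steinF_succ, poissonProb_singleton]
    simp only [Nat.cast_zero, zero_mul, add_zero, steinF]
    rcases Nat.eq_zero_or_pos m with hm | hm
    · subst hm
      rw [if_pos (Set.mem_singleton 0), if_neg (lt_irrefl 0)]
      have h0 : pois lam 0 * vaux lam 0
          = Real.exp (-lam) * ∑' r : ℕ, lam ^ r / (Nat.factorial (r + 1) : ℝ) := by
        rw [pois_vaux_eq 0]
        congr 1
        exact tsum_congr fun r => by norm_num [Nat.add_comm 1 r]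
      rw [h0, ← tail_eq h.ne']
      have : pois lam 0 = Real.exp (-lam) := by simp [pois]
      rw [this]
    · rw [if_neg (by simp only [Set.mem_singleton_iff]; omega), if_pos hm]
      have hu0 : uaux lam 0 = 1 / lam := by
        simp [uaux, Ppart]
      rw [hu0]
      field_simp
      ring
  | succ j ih =>
    rw [steinF_succ, poissonProb_singleton, ih]
    rcases lt_trichotomy (j+1) m with hlt | heq | hgt
    · have hjm : j < m := by omega
      rw [if_pos hjm, if_pos hlt, if_neg (by simp only [Set.mem_singleton_iff]; omega)]
      rw [uaux_rec h j]
      have hl : lam ≠ 0 := h.ne'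
      push_cast
      field_simp
      ring
    · subst heq
      rw [if_pos (Set.mem_singleton (j+1)), if_pos (Nat.lt_succ_self j), if_neg (lt_irrefl (j+1))]
      have hsw := @switch_id lam h j
      have hpu := pois_uaux h j
      rw [div_eq_iff h.ne']
      push_cast
      linear_combination -hsw - hpu
    · have hjm : ¬ j < m := by omega
      rw [if_neg (show ¬ (j+1) ∈ ({m} : Set ℕ) by simp only [Set.mem_singleton_iff]; omega),
        if_neg hjm, if_neg (show ¬ (j+1) < m by omega)]
      rw [div_eq_iff h.ne']
      push_cast
      linear_combination pois lam m * vaux_rec h.le j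

lemma steinF_zero (lam : ℝ) (S : Set ℕ) : steinF lam S 0 = 0 := rfl

/-- Sign: for `m ≠ j` the increment of the singleton Stein solution is nonpositive. -/
lemma single_diff_nonpos {lam : ℝ} (h : 0 < lam) {m j : ℕ} (hmj : m ≠ j) :
    steinF lam {m} (j+1) - steinF lam {m} j ≤ 0 := by
  cases j with
  | zero =>
    rw [steinF_zero, steinF_single h m 0, if_pos (by omega)]
    have := mul_nonneg (pois_nonneg h.le m) (uaux_nonneg h.le 0)
    linarith
  | succ j =>
    rw [steinF_single h m (j+1), steinF_single h m j]
    rcases lt_or_ge (j+1) m with hlt | hle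
    · rw [if_pos hlt, if_pos (by omega)]
      have := mul_le_mul_of_nonneg_left (uaux_mono h j) (pois_nonneg h.le m)
      linarith
    · have hm : m ≤ j := by omega
      rw [if_neg (by omega), if_neg (by omega)]
      have := mul_le_mul_of_nonneg_left (vaux_anti h.le j) (pois_nonneg h.le m)
      linarith

lemma single_diff_jj_nonneg {lam : ℝ} (h : 0 < lam) (j : ℕ) :
    0 ≤ steinF lam {j} (j+1) - steinF lam {j} j := by
  cases j with
  | zero =>
    rw [steinF_zero, steinF_single h 0 0, if_neg (lt_irrefl 0)]
    have := mul_nonneg (pois_nonneg h.le 0) (vaux_nonneg h.le 0)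
    linarith
  | succ j =>
    rw [steinF_single h (j+1) (j+1), steinF_single h (j+1) j,
      if_neg (lt_irrefl (j+1)), if_pos (Nat.lt_succ_self j)]
    have h1 := mul_nonneg (pois_nonneg h.le (j+1)) (vaux_nonneg h.le (j+1))
    have h2 := mul_nonneg (pois_nonneg h.le (j+1)) (uaux_nonneg h.le j)
    linarith

lemma single_diff_jj_le {lam : ℝ} (h : 0 < lam) (j : ℕ) :
    steinF lam {j} (j+1) - steinF lam {j} j ≤ (1 - Real.exp (-lam)) / lam := by
  cases j with
  | zero =>
    rw [steinF_zero, steinF_single h 0 0, if_neg (lt_irrefl 0)]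
    simpa using djj_bound0 h
  | succ j =>
    rw [steinF_single h (j+1) (j+1), steinF_single h (j+1) j,
      if_neg (lt_irrefl (j+1)), if_pos (Nat.lt_succ_self j)]
    have hpu := pois_uaux h j
    have hb := djj_bound h j
    have hj1 : ((j:ℝ)+1) ≠ 0 := by positivity
    have hu : pois lam (j+1) * uaux lam j = Real.exp (-lam) / ((j:ℝ)+1) * Ppart lam j := by
      rw [div_mul_eq_mul_div, eq_div_iff hj1]
      linear_combination hpu
    rw [sub_neg_eq_add, hu]
    exact hb

lemma summable_steinF_single {lam : ℝ} (h : 0 < lam) (j : ℕ) :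
    Summable (fun m => steinF lam {m} j) := by
  cases j with
  | zero => simpa [steinF_zero] using summable_zero
  | succ j =>
    rw [← summable_nat_add_iff (j+1)]
    have hs : Summable (fun m : ℕ => -(pois lam (m + (j+1)) * uaux lam j)) := by
      apply Summable.neg
      apply Summable.mul_right
      exact (summable_nat_add_iff (j+1)).mpr (summable_pois lam)
    refine hs.congr fun m => ?_
    rw [steinF_single h (m + (j+1)) j, if_pos (by omega)]

open Classical in
lemma steinF_decomp {lam : ℝ} (h : 0 < lam) (S : Set ℕ) :
    ∀ j : ℕ, steinF lam S j = ∑' m : S, steinF lam {(m : ℕ)} j := by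
  intro j
  induction j with
  | zero => simp [steinF_zero]
  | succ j ih =>
    have hs1 : Summable (fun m : S => if j ∈ ({(m : ℕ)} : Set ℕ) then (1:ℝ) else 0) := by
      by_cases hj : j ∈ S
      · apply summable_of_ne_finset_zero (s := {(⟨j, hj⟩ : S)})
        intro b hb
        rw [if_neg]
        simp only [Set.mem_singleton_iff]
        intro hbj
        exact hb (by simp [Finset.mem_singleton, Subtype.ext_iff, hbj])
      · apply summable_of_ne_finset_zero (s := (∅ : Finset S))
        intro b _
        rw [if_neg]
        simp only [Set.mem_singleton_iff]
        intro hbj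
        exact hj (hbj ▸ b.2)
    have hs2 : Summable (fun m : S => pois lam (m : ℕ)) := (summable_pois lam).subtype S
    have hs3 : Summable (fun m : S => steinF lam {(m : ℕ)} j) :=
      (summable_steinF_single h j).subtype S
    have hδ : ∑' m : S, (if j ∈ ({(m : ℕ)} : Set ℕ) then (1:ℝ) else 0)
        = if j ∈ S then (1:ℝ) else 0 := by
      by_cases hj : j ∈ S
      · rw [if_pos hj]
        rw [tsum_eq_single (⟨j, hj⟩ : S)]
        · simp
        · intro b hb
          rw [if_neg]
          simp only [Set.mem_singleton_iff]
          intro hbj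
          exact hb (by simp [Subtype.ext_iff, hbj])
      · rw [if_neg hj]
        have : ∀ m : S, (if j ∈ ({(m : ℕ)} : Set ℕ) then (1:ℝ) else 0) = 0 := by
          intro m
          rw [if_neg]
          simp only [Set.mem_singleton_iff]
          intro hbj
          exact hj (hbj ▸ m.2)
        rw [tsum_congr this, tsum_zero]
    calc steinF lam S (j+1)
        = ((if j ∈ S then (1:ℝ) else 0) - poissonProb lam S + (j : ℝ) * steinF lam S j) / lam :=
          steinF_succ lam S j
      _ = ((∑' m : S, (if j ∈ ({(m : ℕ)} : Set ℕ) then (1:ℝ) else 0))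
            - (∑' m : S, pois lam (m : ℕ))
            + (j : ℝ) * ∑' m : S, steinF lam {(m : ℕ)} j) / lam := by
          rw [hδ, ← poissonProb_eq, ih]
      _ = (∑' m : S, ((if j ∈ ({(m : ℕ)} : Set ℕ) then (1:ℝ) else 0) - pois lam (m : ℕ)
            + (j : ℝ) * steinF lam {(m : ℕ)} j)) / lam := by
          rw [Summable.tsum_add (Summable.sub hs1 hs2) (Summable.mul_left ((j:ℝ)) hs3),
            Summable.tsum_sub hs1 hs2, Summable.tsum_mul_left ((j:ℝ)) hs3]
      _ = ∑' m : S, steinF lam {(m : ℕ)} (j+1) := by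
          rw [← tsum_div_const]
          refine tsum_congr fun m => ?_
          rw [steinF_succ, poissonProb_singleton]
          simp [Set.mem_singleton_iff]

lemma steinF_univ {lam : ℝ} (h : 0 < lam) : ∀ j, steinF lam Set.univ j = 0 := by
  intro j
  induction j with
  | zero => rfl
  | succ j ih =>
    rw [steinF_succ, ih]
    have hP : poissonProb lam Set.univ = 1 := by
      rw [poissonProb_eq, tsum_univ (fun j => pois lam j), tsum_pois]
    rw [hP]
    simp

lemma tsum_single_zero {lam : ℝ} (h : 0 < lam) (j : ℕ) :
    ∑' m : ℕ, steinF lam {m} j = 0 := by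
  have := steinF_decomp h Set.univ j
  rw [steinF_univ h j] at this
  rw [← tsum_univ (fun m => steinF lam {m} j)]
  exact this.symm

/-- `∑' m ∈ T, increment ≤` diagonal increment, for any `T`. -/
lemma tsum_diff_le {lam : ℝ} (h : 0 < lam) (j : ℕ) (T : Set ℕ) :
    ∑' m : T, (steinF lam {(m : ℕ)} (j+1) - steinF lam {(m : ℕ)} j)
      ≤ steinF lam {j} (j+1) - steinF lam {j} j := by
  set dj := steinF lam {j} (j+1) - steinF lam {j} j with hdj
  have hDsum : Summable (fun m : T => steinF lam {(m : ℕ)} (j+1) - steinF lam {(m : ℕ)} j) :=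
    ((summable_steinF_single h (j+1)).subtype T).sub ((summable_steinF_single h j).subtype T)
  have hEsum : Summable (fun m : T => if (m : ℕ) = j then dj else 0) := by
    by_cases hj : j ∈ T
    · apply summable_of_ne_finset_zero (s := {(⟨j, hj⟩ : T)})
      intro b hb
      rw [if_neg]
      intro hbj
      exact hb (by simp [Subtype.ext_iff, hbj])
    · apply summable_of_ne_finset_zero (s := (∅ : Finset T))
      intro b _
      rw [if_neg]
      intro hbj
      exact hj (hbj ▸ b.2)
  have hle : ∀ m : T, steinF lam {(m : ℕ)} (j+1) - steinF lam {(m : ℕ)} j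
      ≤ if (m : ℕ) = j then dj else 0 := by
    intro m
    by_cases hmj : (m : ℕ) = j
    · rw [if_pos hmj, hdj, hmj]
    · rw [if_neg hmj]
      exact single_diff_nonpos h hmj
  have h1 : ∑' m : T, (steinF lam {(m : ℕ)} (j+1) - steinF lam {(m : ℕ)} j)
      ≤ ∑' m : T, (if (m : ℕ) = j then dj else 0) := Summable.tsum_le_tsum hle hDsum hEsum
  have h2 : ∑' m : T, (if (m : ℕ) = j then dj else 0) ≤ dj := by
    by_cases hj : j ∈ T
    · rw [tsum_eq_single (⟨j, hj⟩ : T)]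
      · rw [if_pos rfl]
      · intro b hb
        rw [if_neg]
        intro hbj
        exact hb (by simp [Subtype.ext_iff, hbj])
    · have : ∀ m : T, (if (m : ℕ) = j then dj else 0) = 0 := by
        intro m
        rw [if_neg]
        intro hbj
        exact hj (hbj ▸ m.2)
      rw [tsum_congr this, tsum_zero]
      exact single_diff_jj_nonneg h j
  exact le_trans h1 h2

/-- Main analytic bound: increments of the Stein solution are at most 1 in absolute value. -/
lemma steinF_diff_le_one {lam : ℝ} (h : 0 < lam) (S : Set ℕ) (j : ℕ) :
    |steinF lam S (j+1) - steinF lam S j| ≤ 1 := by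
  set dj := steinF lam {j} (j+1) - steinF lam {j} j with hdj
  have hg : Summable (fun m : ℕ => steinF lam {m} (j+1) - steinF lam {m} j) :=
    (summable_steinF_single h (j+1)).sub (summable_steinF_single h j)
  have hdiff : steinF lam S (j+1) - steinF lam S j
      = ∑' m : S, (steinF lam {(m : ℕ)} (j+1) - steinF lam {(m : ℕ)} j) := by
    rw [steinF_decomp h S (j+1), steinF_decomp h S j]
    exact (Summable.tsum_sub ((summable_steinF_single h (j+1)).subtype S)
      ((summable_steinF_single h j).subtype S)).symm
  have key := Summable.tsum_add_tsum_compl (f := fun m : ℕ => steinF lam {m} (j+1) - steinF lam {m} j)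
    (s := S) (hg.subtype S) (hg.subtype Sᶜ)
  have htotal : ∑' m : ℕ, (steinF lam {m} (j+1) - steinF lam {m} j) = 0 := by
    rw [Summable.tsum_sub (summable_steinF_single h (j+1)) (summable_steinF_single h j),
      tsum_single_zero h (j+1), tsum_single_zero h j]
    ring
  beta_reduce at key
  rw [htotal] at key
  have hup : steinF lam S (j+1) - steinF lam S j ≤ dj := by
    rw [hdiff]; exact tsum_diff_le h j S
  have hlow : -dj ≤ steinF lam S (j+1) - steinF lam S j := by
    rw [hdiff]
    have h2 := tsum_diff_le h j Sᶜ
    linarith [key]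
  have hd1 : dj ≤ 1 := le_trans (single_diff_jj_le h j) (stein_factor_le_one h)
  rw [abs_le]
  constructor <;> linarith

/-- Lipschitz property of the Stein solution. -/
lemma steinF_lipschitz {lam : ℝ} (h : 0 < lam) (S : Set ℕ) (b : ℕ) :
    ∀ c : ℕ, |steinF lam S (b + c) - steinF lam S b| ≤ (c : ℝ) := by
  intro c
  induction c with
  | zero => simp
  | succ c ih =>
    have h1 := steinF_diff_le_one h S (b + c)
    have : steinF lam S (b + (c+1)) - steinF lam S b
        = (steinF lam S ((b + c) + 1) - steinF lam S (b + c))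
          + (steinF lam S (b + c) - steinF lam S b) := by
      have : b + (c + 1) = (b + c) + 1 := by omega
      rw [this]; ring
    rw [this]
    push_cast
    calc |_ + _| ≤ |steinF lam S ((b + c) + 1) - steinF lam S (b + c)|
          + |steinF lam S (b + c) - steinF lam S b| := abs_add_le _ _
      _ ≤ 1 + (c : ℝ) := add_le_add h1 ih
      _ = (c : ℝ) + 1 := by ring

open Classical in
lemma stein_identity {lam : ℝ} (h : 0 < lam) (S : Set ℕ) (w : ℕ) :
    lam * steinF lam S (w+1) - (w : ℝ) * steinF lam S w
      = (if w ∈ S then (1:ℝ) else 0) - poissonProb lam S := by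
  rw [steinF_succ]
  field_simp
  ring

section Helpers

variable [MeasurableSpace Ω] (μ : Measure Ω) {n t : ℕ} (A : Fin t → Fin n → Ω → Bool)

lemma measurableSet_support_ge (hmeas : ∀ j i, Measurable (A j i)) (s : ℕ) (X : Finset (Fin n)) :
    MeasurableSet {ω | s ≤ support A X ω} := by
  have hsup : Measurable (fun ω => support A X ω) := by
    have : (fun ω => support A X ω)
        = fun ω => ∑ j : Fin t, if (∀ i ∈ X, A j i ω = true) then 1 else 0 := by
      funext ω
      rw [support, Finset.card_filter]
    rw [this]
    refine Finset.measurable_sum _ fun j _ => Measurable.ite ?_ measurable_const measurable_const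
    have : {ω | ∀ i ∈ X, A j i ω = true} = ⋂ i ∈ (X : Set (Fin n)), (A j i) ⁻¹' {true} := by
      ext ω; simp
    rw [this]
    exact MeasurableSet.biInter (Set.to_countable _)
      (fun i _ => (hmeas j i) (measurableSet_singleton true))
  exact hsup (MeasurableSpace.measurableSet_top (s := {m : ℕ | s ≤ m}))

lemma measurable_countFilter (hmeas : ∀ j i, Measurable (A j i)) (s : ℕ)
    (J : Finset (Finset (Fin n))) :
    Measurable (fun ω => ((J.filter fun Y => s ≤ support A Y ω).card : ℕ)) := by
  have : (fun ω => ((J.filter fun Y => s ≤ support A Y ω).card : ℕ))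
      = fun ω => ∑ Y ∈ J, if s ≤ support A Y ω then 1 else 0 := by
    funext ω
    rw [Finset.card_filter]
  rw [this]
  exact Finset.measurable_sum _ fun Y _ =>
    Measurable.ite (measurableSet_support_ge A hmeas s Y) measurable_const measurable_const

lemma Z_eq_indicator (s : ℕ) (X : Finset (Fin n)) :
    Z A s X = Set.indicator {ω | s ≤ support A X ω} (fun _ => (1:ℝ)) := by
  funext ω
  rw [Z, Set.indicator_apply]
  simp [Set.mem_setOf_eq]

lemma measurable_Z (hmeas : ∀ j i, Measurable (A j i)) (s : ℕ) (X : Finset (Fin n)) :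
    Measurable (Z A s X) :=
  Measurable.ite (measurableSet_support_ge A hmeas s X) measurable_const measurable_const

lemma Z_nonneg (s : ℕ) (X : Finset (Fin n)) (ω : Ω) : 0 ≤ Z A s X ω := by
  rw [Z]; split <;> norm_num

lemma Z_le_one (s : ℕ) (X : Finset (Fin n)) (ω : Ω) : Z A s X ω ≤ 1 := by
  rw [Z]; split <;> norm_num

lemma integral_Z [IsProbabilityMeasure μ] (hmeas : ∀ j i, Measurable (A j i))
    (s : ℕ) (X : Finset (Fin n)) :
    ∫ ω, Z A s X ω ∂μ = pX μ A s X := by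
  rw [Z_eq_indicator, pX, integral_indicator_const (1:ℝ) (measurableSet_support_ge A hmeas s X)]
  simp
  rfl

lemma integral_ZZ [IsProbabilityMeasure μ] (hmeas : ∀ j i, Measurable (A j i))
    (s : ℕ) (X Y : Finset (Fin n)) :
    ∫ ω, Z A s X ω * Z A s Y ω ∂μ = pXY μ A s X Y := by
  have hprod : (fun ω => Z A s X ω * Z A s Y ω)
      = Set.indicator ({ω | s ≤ support A X ω} ∩ {ω | s ≤ support A Y ω}) (fun _ => (1:ℝ)) := by
    funext ω
    rw [Z, Z, Set.indicator_apply]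
    by_cases h1 : s ≤ support A X ω <;> by_cases h2 : s ≤ support A Y ω <;>
      simp [h1, h2, Set.mem_inter_iff, Set.mem_setOf_eq]
  rw [hprod, pXY, integral_indicator_const (1:ℝ)
    ((measurableSet_support_ge A hmeas s X).inter (measurableSet_support_ge A hmeas s Y))]
  simp
  rfl

lemma Qhat_cast (k s : ℕ) (ω : Ω) :
    ((Qhat A k s ω : ℕ) : ℝ) = ∑ X ∈ Finset.univ.powersetCard k, Z A s X ω := by
  rw [Qhat, Finset.card_filter]
  push_cast
  exact Finset.sum_congr rfl fun X _ => by rw [Z]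

lemma integrable_of_bounded [IsProbabilityMeasure μ] {f : Ω → ℝ} (hf : Measurable f)
    (C : ℝ) (hC : ∀ ω, |f ω| ≤ C) : Integrable f μ :=
  (integrable_const C).mono' hf.aestronglyMeasurable
    (ae_of_all _ fun ω => by simpa using hC ω)

set_option maxHeartbeats 1000000 in
/-- The key independence fact: `Z_X` is independent of any counter built from itemsets
disjoint from `X`. -/
lemma indep_Z_count [IsProbabilityMeasure μ] (hmeas : ∀ j i, Measurable (A j i))
    (hindep : iIndepFun
      (fun p : Fin t × Fin n => A p.1 p.2) μ)
    (s : ℕ) (X : Finset (Fin n)) (J : Finset (Finset (Fin n))) (hJ : ∀ Y ∈ J, Y ∩ X = ∅) :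
    IndepFun (Z A s X) (fun ω => ((J.filter fun Y => s ≤ support A Y ω).card : ℕ)) μ := by
  classical
  set S1 : Finset (Fin t × Fin n) := Finset.univ ×ˢ X with hS1
  set T1 : Finset (Fin t × Fin n) := Finset.univ ×ˢ Xᶜ with hT1
  have hdisj : Disjoint S1 T1 := by
    rw [Finset.disjoint_left]
    intro p hp hp'
    rw [hS1, Finset.mem_product] at hp
    rw [hT1, Finset.mem_product, Finset.mem_compl] at hp'
    exact hp'.2 hp.2
  have base := hindep.indepFun_finset S1 T1 hdisj (fun p => hmeas p.1 p.2)
  set φZ : (S1 → Bool) → ℝ := fun v =>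
    if s ≤ (Finset.univ.filter fun jj : Fin t =>
        ∀ p : S1, ((p : Fin t × Fin n).1 = jj → v p = true)).card then 1 else 0 with hφZ
  set φV : (T1 → Bool) → ℕ := fun v =>
    ((J.filter fun Y => s ≤ (Finset.univ.filter fun jj : Fin t =>
      ∀ p : T1, ((p : Fin t × Fin n).1 = jj → ((p : Fin t × Fin n).2 ∈ Y → v p = true))).card).card)
    with hφV
  have heqZ : Z A s X = φZ ∘ (fun ω (p : S1) => A (p : Fin t × Fin n).1 (p : Fin t × Fin n).2 ω) := by
    funext ω
    rw [Function.comp_apply, hφZ, Z]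
    beta_reduce
    have hcard : (Finset.univ.filter fun jj : Fin t =>
        ∀ p : S1, ((p : Fin t × Fin n).1 = jj → A (p : Fin t × Fin n).1 (p : Fin t × Fin n).2 ω = true)).card
        = support A X ω := by
      rw [support]
      refine congrArg Finset.card (Finset.filter_congr ?_)
      intro jj _
      constructor
      · intro hp i hi
        exact hp ⟨(jj, i), by rw [hS1, Finset.mem_product]; exact ⟨Finset.mem_univ _, hi⟩⟩ rfl
      · intro hX p hp1
        have hp2 : (p : Fin t × Fin n).2 ∈ X := by
          have hmem : (↑p : Fin t × Fin n) ∈ Finset.univ ×ˢ X := p.2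
          exact (Finset.mem_product.mp hmem).2
        have := hX _ hp2
        rw [← hp1] at this
        exact this
    rw [hcard]
  have heqV : (fun ω => ((J.filter fun Y => s ≤ support A Y ω).card : ℕ))
      = φV ∘ (fun ω (p : T1) => A (p : Fin t × Fin n).1 (p : Fin t × Fin n).2 ω) := by
    funext ω
    rw [Function.comp_apply, hφV]
    beta_reduce
    refine congrArg Finset.card (Finset.filter_congr ?_)
    intro Y hY
    have hYX : Y ∩ X = ∅ := hJ Y hY
    have hsub : ∀ i ∈ Y, i ∈ Xᶜ := by
      intro i hi
      rw [Finset.mem_compl]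
      intro hiX
      have : i ∈ Y ∩ X := Finset.mem_inter.mpr ⟨hi, hiX⟩
      rw [hYX] at this
      exact absurd this (Finset.notMem_empty i)
    have hfeq : (Finset.univ.filter fun jj : Fin t =>
        ∀ p : T1, ((p : Fin t × Fin n).1 = jj → ((p : Fin t × Fin n).2 ∈ Y →
          A (p : Fin t × Fin n).1 (p : Fin t × Fin n).2 ω = true)))
        = (Finset.univ.filter fun jj : Fin t => ∀ i ∈ Y, A jj i ω = true) := by
      apply Finset.filter_congr
      intro jj _
      constructor
      · intro hp i hi
        exact hp ⟨(jj, i), by rw [hT1, Finset.mem_product]; exact ⟨Finset.mem_univ _, hsub i hi⟩⟩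
          rfl hi
      · intro hY2 p hp1 hpY
        have := hY2 _ hpY
        rw [← hp1] at this
        exact this
    rw [support, ← hfeq]
  rw [heqZ, heqV]
  have hcount1 : Countable (S1 → Bool) := by infer_instance
  have hcount2 : Countable (T1 → Bool) := by infer_instance
  exact base.comp (measurable_of_countable φZ) (measurable_of_countable φV)

lemma count_cast (s : ℕ) (J : Finset (Finset (Fin n))) (ω : Ω) :
    (((J.filter fun Y => s ≤ support A Y ω).card : ℕ) : ℝ) = ∑ Y ∈ J, Z A s Y ω := by
  rw [Finset.card_filter]
  push_cast
  exact Finset.sum_congr rfl fun X _ => by rw [Z]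

end Helpers

section PerX

variable [MeasurableSpace Ω] (μ : Measure Ω) [IsProbabilityMeasure μ]
  {n t : ℕ} (A : Fin t → Fin n → Ω → Bool)

set_option maxHeartbeats 1000000 in
/-- The per-itemset estimate in the Chen-Stein argument. -/
lemma perX_bound (hmeas : ∀ j i, Measurable (A j i))
    (hindep : iIndepFun (fun p : Fin t × Fin n => A p.1 p.2) μ)
    (k s : ℕ) (hk : 1 ≤ k) {lam : ℝ} (hpos : 0 < lam) (S : Set ℕ)
    (X : Finset (Fin n)) (hX : X ∈ Finset.univ.powersetCard k) :
    |pX μ A s X * ∫ ω, steinF lam S (Qhat A k s ω + 1) ∂μ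
      - ∫ ω, Z A s X ω * steinF lam S (Qhat A k s ω) ∂μ|
    ≤ (∑ Y ∈ (Finset.univ.powersetCard k).filter (fun Y => Y ∩ X ≠ ∅),
          pX μ A s X * pX μ A s Y)
      + ∑ Y ∈ (Finset.univ.powersetCard k).filter (fun Y => Y ∩ X ≠ ∅ ∧ Y ≠ X),
          pXY μ A s X Y := by
  classical
  set I : Finset (Finset (Fin n)) := Finset.univ.powersetCard k with hI
  set g : ℕ → ℝ := steinF lam S with hg
  set DX : Finset (Finset (Fin n)) := I.filter (fun Y => Y ∩ X = ∅) with hDX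
  set MX : Finset (Finset (Fin n)) := I.filter (fun Y => Y ∩ X ≠ ∅ ∧ Y ≠ X) with hMX
  set NX : Finset (Finset (Fin n)) := I.filter (fun Y => Y ∩ X ≠ ∅) with hNX
  set Vf : Ω → ℕ := fun ω => ((DX.filter fun Y => s ≤ support A Y ω).card : ℕ) with hVf
  set Uf : Ω → ℝ := fun ω => ∑ Y ∈ MX, Z A s Y ω with hUf
  -- generic bounds on g
  have hGlip : ∀ b c : ℕ, |g (b + c) - g b| ≤ (c : ℝ) := fun b c => steinF_lipschitz hpos S b c
  have hGbound : ∀ m : ℕ, |g m| ≤ (m : ℝ) := by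
    intro m
    have h1 := hGlip 0 m
    rw [Nat.zero_add] at h1
    have h0 : g 0 = 0 := steinF_zero lam S
    rw [h0, sub_zero] at h1
    exact h1
  -- membership facts
  have hXcard : X.card = k := by
    have := Finset.mem_powersetCard.mp hX
    exact this.2
  have hXne : X ≠ ∅ := by
    intro hempty
    rw [hempty] at hXcard
    simp at hXcard
    omega
  have hXinNX : X ∈ NX := by
    rw [hNX, Finset.mem_filter]
    exact ⟨hX, by rwa [Finset.inter_self]⟩
  have herase : NX.erase X = MX := by
    ext Y
    rw [Finset.mem_erase, hNX, hMX, Finset.mem_filter, Finset.mem_filter]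
    tauto
  have hsum_split : ∀ f : Finset (Fin n) → ℝ,
      ∑ Y ∈ I, f Y = f X + ∑ Y ∈ MX, f Y + ∑ Y ∈ DX, f Y := by
    intro f
    have h1 : ∑ Y ∈ NX, f Y + ∑ Y ∈ I.filter (fun Y => ¬ (Y ∩ X ≠ ∅)), f Y
        = ∑ Y ∈ I, f Y := Finset.sum_filter_add_sum_filter_not I _ f
    have h2 : I.filter (fun Y => ¬ (Y ∩ X ≠ ∅)) = DX := by
      rw [hDX]
      exact Finset.filter_congr fun Y _ => by tauto
    have h3 : f X + ∑ Y ∈ NX.erase X, f Y = ∑ Y ∈ NX, f Y :=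
      Finset.add_sum_erase NX f hXinNX
    rw [h2] at h1
    rw [← h1, ← h3, herase]
  -- decomposition
  have hdec : ∀ ω, ((Qhat A k s ω : ℕ) : ℝ) = Z A s X ω + Uf ω + (Vf ω : ℝ) := by
    intro ω
    rw [Qhat_cast A k s ω, hUf, hVf, count_cast A s DX ω]
    exact hsum_split (fun Y => Z A s Y ω)
  have hVleQ : ∀ ω, Vf ω ≤ Qhat A k s ω := by
    intro ω
    rw [hVf, Qhat]
    exact Finset.card_le_card
      (Finset.filter_subset_filter _ (Finset.filter_subset _ I))
  have hUnonneg : ∀ ω, 0 ≤ Uf ω := fun ω =>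
    Finset.sum_nonneg fun Y _ => Z_nonneg A s Y ω
  have hQleN : ∀ ω, Qhat A k s ω ≤ I.card := fun ω =>
    Finset.card_le_card (Finset.filter_subset _ I)
  have hVleN : ∀ ω, Vf ω ≤ I.card := fun ω => le_trans (hVleQ ω) (hQleN ω)
  -- measurability and integrability
  have hQmeas : Measurable (fun ω => Qhat A k s ω) := measurable_countFilter A hmeas s I
  have hVmeas : Measurable Vf := measurable_countFilter A hmeas s DX
  have hZmeas : ∀ Y, Measurable (Z A s Y) := fun Y => measurable_Z A hmeas s Y
  have hZint : ∀ Y, Integrable (Z A s Y) μ := fun Y =>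
    integrable_of_bounded μ (hZmeas Y) 1
      (fun ω => abs_le.mpr ⟨by linarith [Z_nonneg A s Y ω], Z_le_one A s Y ω⟩)
  set C : ℝ := (I.card : ℝ) + 1 with hC
  have habs_g : ∀ (f : Ω → ℕ), (∀ ω, f ω ≤ I.card + 1) → ∀ ω, |g (f ω)| ≤ C := by
    intro f hf ω
    refine le_trans (hGbound (f ω)) ?_
    rw [hC]
    have h2 : ((f ω : ℕ) : ℝ) ≤ ((I.card + 1 : ℕ) : ℝ) := Nat.cast_le.mpr (hf ω)
    push_cast at h2
    linarith
  have hgQ1meas : Measurable (fun ω => g (Qhat A k s ω + 1)) :=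
    (measurable_of_countable (fun v : ℕ => g (v + 1))).comp hQmeas
  have hgQmeas : Measurable (fun ω => g (Qhat A k s ω)) :=
    (measurable_of_countable (fun v : ℕ => g v)).comp hQmeas
  have hgV1meas : Measurable (fun ω => g (Vf ω + 1)) :=
    (measurable_of_countable (fun v : ℕ => g (v + 1))).comp hVmeas
  have hgQ1int : Integrable (fun ω => g (Qhat A k s ω + 1)) μ :=
    integrable_of_bounded μ hgQ1meas C
      (habs_g (fun ω => Qhat A k s ω + 1) (fun ω => by show Qhat A k s ω + 1 ≤ I.card + 1; have := hQleN ω; omega))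
  have hgQint : Integrable (fun ω => g (Qhat A k s ω)) μ :=
    integrable_of_bounded μ hgQmeas C
      (habs_g (fun ω => Qhat A k s ω) (fun ω => by show Qhat A k s ω ≤ I.card + 1; have := hQleN ω; omega))
  have hgV1int : Integrable (fun ω => g (Vf ω + 1)) μ :=
    integrable_of_bounded μ hgV1meas C
      (habs_g (fun ω => Vf ω + 1) (fun ω => by show Vf ω + 1 ≤ I.card + 1; have := hVleN ω; omega))
  have hZgQint : Integrable (fun ω => Z A s X ω * g (Qhat A k s ω)) μ :=
    integrable_of_bounded μ ((hZmeas X).mul hgQmeas) C (fun ω => by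
      rw [abs_mul]
      have h1 : |Z A s X ω| ≤ 1 :=
        abs_le.mpr ⟨by linarith [Z_nonneg A s X ω], Z_le_one A s X ω⟩
      have h2 : |g (Qhat A k s ω)| ≤ C :=
        habs_g (fun ω => Qhat A k s ω) (fun ω => by show Qhat A k s ω ≤ I.card + 1; have := hQleN ω; omega) ω
      have h3 : (0:ℝ) ≤ |g (Qhat A k s ω)| := abs_nonneg _
      nlinarith)
  have hZgV1int : Integrable (fun ω => Z A s X ω * g (Vf ω + 1)) μ :=
    integrable_of_bounded μ ((hZmeas X).mul hgV1meas) C (fun ω => by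
      rw [abs_mul]
      have h1 : |Z A s X ω| ≤ 1 :=
        abs_le.mpr ⟨by linarith [Z_nonneg A s X ω], Z_le_one A s X ω⟩
      have h2 : |g (Vf ω + 1)| ≤ C :=
        habs_g (fun ω => Vf ω + 1) (fun ω => by show Vf ω + 1 ≤ I.card + 1; have := hVleN ω; omega) ω
      have h3 : (0:ℝ) ≤ |g (Vf ω + 1)| := abs_nonneg _
      nlinarith)
  have hUint : Integrable Uf μ := by
    rw [hUf]
    exact integrable_finset_sum _ (fun Y _ => hZint Y)
  have hZUint : Integrable (fun ω => Z A s X ω * Uf ω) μ := by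
    have : (fun ω => Z A s X ω * Uf ω) = fun ω => ∑ Y ∈ MX, Z A s X ω * Z A s Y ω := by
      funext ω
      rw [hUf, Finset.mul_sum]
    rw [this]
    refine integrable_finset_sum _ (fun Y _ => ?_)
    exact integrable_of_bounded μ ((hZmeas X).mul (hZmeas Y)) 1 (fun ω => by
      rw [abs_mul]
      have h1 : |Z A s X ω| ≤ 1 :=
        abs_le.mpr ⟨by linarith [Z_nonneg A s X ω], Z_le_one A s X ω⟩
      have h2 : |Z A s Y ω| ≤ 1 :=
        abs_le.mpr ⟨by linarith [Z_nonneg A s Y ω], Z_le_one A s Y ω⟩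
      nlinarith [abs_nonneg (Z A s X ω), abs_nonneg (Z A s Y ω)])
  -- independence step
  have hindepZV : IndepFun (Z A s X) Vf μ := by
    rw [hVf]
    exact indep_Z_count μ A hmeas hindep s X DX
      (fun Y hY => (Finset.mem_filter.mp hY).2)
  have hindepZgV : IndepFun (Z A s X) (fun ω => g (Vf ω + 1)) μ := by
    have hcomp := hindepZV.comp (measurable_id (α := ℝ))
      (measurable_of_countable (fun v : ℕ => g (v + 1)))
    have h1 : (id ∘ Z A s X) = Z A s X := rfl
    have h2 : ((fun v : ℕ => g (v + 1)) ∘ Vf) = fun ω => g (Vf ω + 1) := rfl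
    rwa [h1, h2] at hcomp
  have hE3 : ∫ ω, Z A s X ω * g (Vf ω + 1) ∂μ
      = pX μ A s X * ∫ ω, g (Vf ω + 1) ∂μ := by
    have hmm := hindepZgV.integral_mul_eq_mul_integral (hZint X).aestronglyMeasurable hgV1int.aestronglyMeasurable
    have hrw : (Z A s X * fun ω => g (Vf ω + 1)) = fun ω => Z A s X ω * g (Vf ω + 1) := rfl
    rw [hrw] at hmm
    rw [hmm, integral_Z μ A hmeas s X]
  -- pointwise Lipschitz bounds
  have hP1 : ∀ ω, |g (Qhat A k s ω + 1) - g (Vf ω + 1)| ≤ Z A s X ω + Uf ω := by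
    intro ω
    have hc : (Vf ω + 1) + (Qhat A k s ω - Vf ω) = Qhat A k s ω + 1 := by
      have := hVleQ ω; omega
    have := hGlip (Vf ω + 1) (Qhat A k s ω - Vf ω)
    rw [hc] at this
    refine le_trans this ?_
    have hcast : ((Qhat A k s ω - Vf ω : ℕ) : ℝ) = (Qhat A k s ω : ℝ) - (Vf ω : ℝ) := by
      exact_mod_cast Nat.cast_sub (hVleQ ω)
    rw [hcast]
    have := hdec ω
    linarith
  have hP2 : ∀ ω, |Z A s X ω * (g (Qhat A k s ω) - g (Vf ω + 1))| ≤ Z A s X ω * Uf ω := by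
    intro ω
    by_cases hz : s ≤ support A X ω
    · have hz1 : Z A s X ω = 1 := by rw [Z, if_pos hz]
      rw [hz1, one_mul, one_mul]
      have hVQ : Vf ω + 1 ≤ Qhat A k s ω := by
        have hd := hdec ω
        rw [hz1] at hd
        have : ((Vf ω : ℝ)) + 1 ≤ (Qhat A k s ω : ℝ) := by
          have := hUnonneg ω
          linarith
        exact_mod_cast this
      have hc : (Vf ω + 1) + (Qhat A k s ω - (Vf ω + 1)) = Qhat A k s ω := by omega
      have := hGlip (Vf ω + 1) (Qhat A k s ω - (Vf ω + 1))
      rw [hc] at this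
      refine le_trans this ?_
      have hcast : ((Qhat A k s ω - (Vf ω + 1) : ℕ) : ℝ)
          = (Qhat A k s ω : ℝ) - ((Vf ω : ℝ) + 1) := by
        push_cast [Nat.cast_sub hVQ]
        ring
      rw [hcast]
      have hd := hdec ω
      rw [hz1] at hd
      linarith
    · have hz0 : Z A s X ω = 0 := by rw [Z, if_neg hz]
      rw [hz0, zero_mul, zero_mul, abs_zero]
  -- integral bounds
  have hintZU : ∫ ω, Z A s X ω * Uf ω ∂μ
      = ∑ Y ∈ MX, pXY μ A s X Y := by
    have h1 : (fun ω => Z A s X ω * Uf ω) = fun ω => ∑ Y ∈ MX, Z A s X ω * Z A s Y ω := by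
      funext ω
      rw [hUf, Finset.mul_sum]
    rw [h1, integral_finset_sum _ (fun Y _ => integrable_of_bounded μ (f := fun ω => Z A s X ω * Z A s Y ω)
      ((hZmeas X).mul (hZmeas Y)) 1 (fun ω => by
        rw [abs_mul]
        have h1 : |Z A s X ω| ≤ 1 :=
          abs_le.mpr ⟨by linarith [Z_nonneg A s X ω], Z_le_one A s X ω⟩
        have h2 : |Z A s Y ω| ≤ 1 :=
          abs_le.mpr ⟨by linarith [Z_nonneg A s Y ω], Z_le_one A s Y ω⟩
        nlinarith [abs_nonneg (Z A s X ω), abs_nonneg (Z A s Y ω)]))]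
    exact Finset.sum_congr rfl fun Y _ => integral_ZZ μ A hmeas s X Y
  have hintZplusU : ∫ ω, (Z A s X ω + Uf ω) ∂μ
      = pX μ A s X + ∑ Y ∈ MX, pX μ A s Y := by
    rw [integral_add (hZint X) hUint, integral_Z μ A hmeas s X, hUf]
    congr 1
    rw [integral_finset_sum _ (fun Y _ => hZint Y)]
    exact Finset.sum_congr rfl fun Y _ => integral_Z μ A hmeas s Y
  have hE1 : |∫ ω, (g (Qhat A k s ω + 1) - g (Vf ω + 1)) ∂μ|
      ≤ pX μ A s X + ∑ Y ∈ MX, pX μ A s Y := by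
    rw [← hintZplusU]
    have habs := norm_integral_le_integral_norm (μ := μ)
      (fun ω => (g (Qhat A k s ω + 1) - g (Vf ω + 1)))
    simp only [Real.norm_eq_abs] at habs
    refine le_trans habs ?_
    refine integral_mono_of_nonneg (ae_of_all _ fun ω => abs_nonneg _)
      ((hZint X).add hUint) (ae_of_all _ fun ω => hP1 ω)
  have hE2 : |∫ ω, Z A s X ω * (g (Qhat A k s ω) - g (Vf ω + 1)) ∂μ|
      ≤ ∑ Y ∈ MX, pXY μ A s X Y := by
    rw [← hintZU]
    have habs := norm_integral_le_integral_norm (μ := μ)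
      (fun ω => Z A s X ω * (g (Qhat A k s ω) - g (Vf ω + 1)))
    simp only [Real.norm_eq_abs] at habs
    refine le_trans habs ?_
    refine integral_mono_of_nonneg (ae_of_all _ fun ω => abs_nonneg _)
      hZUint (ae_of_all _ fun ω => hP2 ω)
  -- assembling the per-X inequality
  have hid : pX μ A s X * ∫ ω, g (Qhat A k s ω + 1) ∂μ
        - ∫ ω, Z A s X ω * g (Qhat A k s ω) ∂μ
      = pX μ A s X * ∫ ω, (g (Qhat A k s ω + 1) - g (Vf ω + 1)) ∂μ
        - ∫ ω, Z A s X ω * (g (Qhat A k s ω) - g (Vf ω + 1)) ∂μ := by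
    have hsplit1 : ∫ ω, (g (Qhat A k s ω + 1) - g (Vf ω + 1)) ∂μ
        = ∫ ω, g (Qhat A k s ω + 1) ∂μ - ∫ ω, g (Vf ω + 1) ∂μ :=
      integral_sub hgQ1int hgV1int
    have hsplit2 : ∫ ω, Z A s X ω * (g (Qhat A k s ω) - g (Vf ω + 1)) ∂μ
        = ∫ ω, Z A s X ω * g (Qhat A k s ω) ∂μ - ∫ ω, Z A s X ω * g (Vf ω + 1) ∂μ := by
      rw [← integral_sub hZgQint hZgV1int]
      congr 1
      funext ω
      ring
    rw [hsplit1, hsplit2, hE3]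
    ring
  rw [hid]
  have hNXsum : ∑ Y ∈ NX, pX μ A s X * pX μ A s Y
      = pX μ A s X * (pX μ A s X + ∑ Y ∈ MX, pX μ A s Y) := by
    rw [← Finset.add_sum_erase NX _ hXinNX, herase, mul_add, Finset.mul_sum]
  have hpXnn : 0 ≤ pX μ A s X := ENNReal.toReal_nonneg
  calc |pX μ A s X * ∫ ω, (g (Qhat A k s ω + 1) - g (Vf ω + 1)) ∂μ
        - ∫ ω, Z A s X ω * (g (Qhat A k s ω) - g (Vf ω + 1)) ∂μ|
      ≤ |pX μ A s X * ∫ ω, (g (Qhat A k s ω + 1) - g (Vf ω + 1)) ∂μ|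
        + |∫ ω, Z A s X ω * (g (Qhat A k s ω) - g (Vf ω + 1)) ∂μ| := abs_sub _ _
    _ ≤ pX μ A s X * (pX μ A s X + ∑ Y ∈ MX, pX μ A s Y) + ∑ Y ∈ MX, pXY μ A s X Y := by
        refine add_le_add ?_ hE2
        rw [abs_mul, abs_of_nonneg hpXnn]
        exact mul_le_mul_of_nonneg_left hE1 hpXnn
    _ = (∑ Y ∈ NX, pX μ A s X * pX μ A s Y) + ∑ Y ∈ MX, pXY μ A s X Y := by
        rw [hNXsum]

end PerX

open Classical in
lemma poissonProb_zero (S : Set ℕ) : poissonProb 0 S = if 0 ∈ S then (1:ℝ) else 0 := by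
  rw [poissonProb]
  have hterm : ∀ j : S, Real.exp (-0) * (0:ℝ) ^ (j : ℕ) / (Nat.factorial (j : ℕ) : ℝ)
      = if ((j : ℕ) = 0) then (1:ℝ) else 0 := by
    intro j
    cases hj : (j : ℕ) with
    | zero => simp
    | succ m => simp
  rw [tsum_congr hterm]
  by_cases h0 : 0 ∈ S
  · rw [if_pos h0, tsum_eq_single (⟨0, h0⟩ : S)]
    · simp
    · intro b hb
      rw [if_neg]
      intro hb0
      exact hb (by simp [Subtype.ext_iff, hb0])
  · rw [if_neg h0]
    have hz : ∀ j : S, (if ((j : ℕ) = 0) then (1:ℝ) else 0) = 0 := fun j => by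
      rw [if_neg]
      intro hj
      exact h0 (hj ▸ j.2)
    rw [tsum_congr hz, tsum_zero]

set_option maxHeartbeats 1000000 in
/-- **Chen–Stein bound (Theorem 1 / Theorem `arratia`).**
In the random dataset model (items placed in transactions independently, item `i` with
probability `f i`), the variation distance between the law of `Q̂_{k,s}` and the law of a
Poisson random variable `U` with the same mean `λ = E[Q̂_{k,s}]` is at most `b₁(s) + b₂(s)`:
for every `A ⊆ ℕ`, `|Pr(Q̂_{k,s} ∈ A) − Pr(U ∈ A)| ≤ b₁(s) + b₂(s)`. -/
theorem chen_stein_bound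
    {Ω : Type*} [MeasurableSpace Ω] (μ : Measure Ω) [IsProbabilityMeasure μ]
    {n t : ℕ} (hn : 1 ≤ n) (ht : 1 ≤ t)
    (f : Fin n → ℝ) (hf : ∀ i, f i ∈ Set.Icc (0:ℝ) 1)
    (A : Fin t → Fin n → Ω → Bool)
    (hmeas : ∀ j i, Measurable (A j i))
    (hindep : iIndepFun
      (fun p : Fin t × Fin n => A p.1 p.2) μ)
    (hfreq : ∀ j i, μ {ω | A j i ω = true} = ENNReal.ofReal (f i))
    (k s : ℕ) (hk : 1 ≤ k) (hs : 1 ≤ s)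
    (lam : ℝ) (hlam : lam = ∫ ω, (Qhat A k s ω : ℝ) ∂μ) :
    ∀ S : Set ℕ,
      |(μ {ω | Qhat A k s ω ∈ S}).toReal - poissonProb lam S|
        ≤ b1 μ A k s + b2 μ A k s := by
  classical
  intro S
  have hQmeas : Measurable (fun ω => Qhat A k s ω) :=
    measurable_countFilter A hmeas s (Finset.univ.powersetCard k)
  have hSmeasN : MeasurableSet (S : Set ℕ) := MeasurableSpace.measurableSet_top
  have hSmeas : MeasurableSet {ω | Qhat A k s ω ∈ S} := hQmeas hSmeasN
  have hZint : ∀ Y : Finset (Fin n), Integrable (Z A s Y) μ := fun Y =>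
    integrable_of_bounded μ (measurable_Z A hmeas s Y) 1
      (fun ω => abs_le.mpr ⟨by linarith [Z_nonneg A s Y ω], Z_le_one A s Y ω⟩)
  have hlam_sum : lam = ∑ X ∈ Finset.univ.powersetCard k, pX μ A s X := by
    rw [hlam]
    have hc : (fun ω => ((Qhat A k s ω : ℕ) : ℝ))
        = fun ω => ∑ X ∈ Finset.univ.powersetCard k, Z A s X ω := funext (Qhat_cast A k s)
    rw [hc, integral_finset_sum _ (fun X _ => hZint X)]
    exact Finset.sum_congr rfl fun X _ => integral_Z μ A hmeas s X
  have hpXnn : ∀ X, 0 ≤ pX μ A s X := fun X => ENNReal.toReal_nonneg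
  have hb1nn : 0 ≤ b1 μ A k s :=
    Finset.sum_nonneg fun X _ => Finset.sum_nonneg fun Y _ => mul_nonneg (hpXnn X) (hpXnn Y)
  have hb2nn : 0 ≤ b2 μ A k s :=
    Finset.sum_nonneg fun X _ => Finset.sum_nonneg fun Y _ => ENNReal.toReal_nonneg
  have hlam_nonneg : 0 ≤ lam := by
    rw [hlam_sum]
    exact Finset.sum_nonneg fun X _ => hpXnn X
  rcases eq_or_lt_of_le hlam_nonneg with hzero | hpos
  · -- degenerate case `lam = 0`
    have hall0 : ∀ X ∈ Finset.univ.powersetCard k, pX μ A s X = 0 := by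
      have hsum0 : ∑ X ∈ Finset.univ.powersetCard k, pX μ A s X = 0 := by
        rw [← hlam_sum, ← hzero]
      exact fun X hX =>
        (Finset.sum_eq_zero_iff_of_nonneg (fun Y _ => hpXnn Y)).mp hsum0 X hX
    have hE0 : ∀ X ∈ Finset.univ.powersetCard k, μ {ω | s ≤ support A X ω} = 0 := by
      intro X hX
      have h1 := hall0 X hX
      rw [pX] at h1
      rcases (ENNReal.toReal_eq_zero_iff _).mp h1 with h | h
      · exact h
      · exact absurd h (measure_ne_top μ _)
    have hb1z : b1 μ A k s = 0 := by
      rw [b1]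
      refine Finset.sum_eq_zero fun X hX => Finset.sum_eq_zero fun Y _ => ?_
      rw [hall0 X hX, zero_mul]
    have hb2z : b2 μ A k s = 0 := by
      rw [b2]
      refine Finset.sum_eq_zero fun X hX => Finset.sum_eq_zero fun Y _ => ?_
      rw [pXY]
      have h0 : μ ({ω | s ≤ support A X ω} ∩ {ω | s ≤ support A Y ω}) = 0 :=
        measure_mono_null Set.inter_subset_left (hE0 X hX)
      rw [h0]
      simp
    have hnull : μ {ω | Qhat A k s ω ≠ 0} = 0 := by
      have hU : μ (⋃ X ∈ Finset.univ.powersetCard k, {ω | s ≤ support A X ω}) = 0 := by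
        refine le_antisymm ?_ (by positivity)
        refine le_trans (measure_biUnion_finset_le _ _) ?_
        rw [Finset.sum_congr rfl (fun X hX => hE0 X hX)]
        simp
      refine measure_mono_null ?_ hU
      intro ω hω
      rw [Set.mem_setOf_eq, Qhat] at hω
      have hne : ((Finset.univ.powersetCard k).filter
          fun X => s ≤ support A X ω).Nonempty := Finset.card_ne_zero.mp hω
      obtain ⟨X, hX⟩ := hne
      rw [Finset.mem_filter] at hX
      exact Set.mem_biUnion hX.1 hX.2
    rw [← hzero, poissonProb_zero, hb1z, hb2z]
    by_cases h0S : 0 ∈ S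
    · rw [if_pos h0S]
      have hcompl : μ {ω | Qhat A k s ω ∈ S}ᶜ = 0 := by
        refine measure_mono_null ?_ hnull
        intro ω hω
        simp only [Set.mem_compl_iff, Set.mem_setOf_eq] at hω ⊢
        intro h0
        exact hω (h0 ▸ h0S)
      have hone : μ {ω | Qhat A k s ω ∈ S} = 1 :=
        (prob_compl_eq_zero_iff hSmeas).mp hcompl
      rw [hone]
      simp
    · rw [if_neg h0S]
      have hz2 : μ {ω | Qhat A k s ω ∈ S} = 0 := by
        refine measure_mono_null ?_ hnull
        intro ω hω
        simp only [Set.mem_setOf_eq] at hω ⊢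
        intro h0
        exact h0S (h0 ▸ hω)
      rw [hz2]
      simp
  · -- main case `0 < lam`
    set g : ℕ → ℝ := steinF lam S with hg
    have key : ∀ X ∈ Finset.univ.powersetCard k,
        |pX μ A s X * ∫ ω, g (Qhat A k s ω + 1) ∂μ
            - ∫ ω, Z A s X ω * g (Qhat A k s ω) ∂μ|
        ≤ (∑ Y ∈ (Finset.univ.powersetCard k).filter (fun Y => Y ∩ X ≠ ∅),
              pX μ A s X * pX μ A s Y)
          + ∑ Y ∈ (Finset.univ.powersetCard k).filter (fun Y => Y ∩ X ≠ ∅ ∧ Y ≠ X),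
              pXY μ A s X Y :=
      fun X hX => perX_bound μ A hmeas hindep k s hk hpos S X hX
    -- bounds and integrability
    have hGlip : ∀ b c : ℕ, |g (b + c) - g b| ≤ (c : ℝ) := fun b c =>
      steinF_lipschitz hpos S b c
    have hGbound : ∀ m : ℕ, |g m| ≤ (m : ℝ) := by
      intro m
      have h1 := hGlip 0 m
      rw [Nat.zero_add] at h1
      have h0 : g 0 = 0 := steinF_zero lam S
      rw [h0, sub_zero] at h1
      exact h1
    set N : ℕ := (Finset.univ.powersetCard (α := Fin n) k).card with hN
    have hQleN : ∀ ω, Qhat A k s ω ≤ N := fun ω =>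
      Finset.card_le_card (Finset.filter_subset _ _)
    have hgQ1meas : Measurable (fun ω => g (Qhat A k s ω + 1)) :=
      (measurable_of_countable (fun v : ℕ => g (v + 1))).comp hQmeas
    have hgQ1int : Integrable (fun ω => g (Qhat A k s ω + 1)) μ :=
      integrable_of_bounded μ hgQ1meas ((N : ℝ) + 1) (fun ω => by
        refine le_trans (hGbound (Qhat A k s ω + 1)) ?_
        have := hQleN ω
        push_cast
        exact_mod_cast by
          have : ((Qhat A k s ω + 1 : ℕ) : ℝ) ≤ ((N + 1 : ℕ) : ℝ) :=
            Nat.cast_le.mpr (by omega)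
          push_cast at this
          linarith)
    have hQgQint : Integrable (fun ω => (Qhat A k s ω : ℝ) * g (Qhat A k s ω)) μ := by
      refine integrable_of_bounded μ
        ((measurable_of_countable (fun v : ℕ => (v : ℝ) * g v)).comp hQmeas)
        ((N : ℝ) * ((N : ℝ) + 1)) (fun ω => ?_)
      rw [abs_mul]
      have h1 : |(Qhat A k s ω : ℝ)| ≤ (N : ℝ) := by
        rw [abs_of_nonneg (by positivity)]
        exact_mod_cast hQleN ω
      have h2 : |g (Qhat A k s ω)| ≤ (N : ℝ) + 1 := by
        refine le_trans (hGbound _) ?_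
        have := hQleN ω
        have : ((Qhat A k s ω : ℕ) : ℝ) ≤ (N : ℝ) := by exact_mod_cast this
        linarith
      have h3 : (0:ℝ) ≤ |g (Qhat A k s ω)| := abs_nonneg _
      have h4 : (0:ℝ) ≤ (N:ℝ) := by positivity
      nlinarith
    have hIfInt : Integrable (fun ω => if Qhat A k s ω ∈ S then (1:ℝ) else 0) μ := by
      refine integrable_of_bounded μ ?_ 1 (fun ω => by split <;> norm_num)
      exact Measurable.ite hSmeas measurable_const measurable_const
    -- the Stein-identity computation of the LHS
    have hstein_pt : (fun ω => lam * g (Qhat A k s ω + 1)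
          - (Qhat A k s ω : ℝ) * g (Qhat A k s ω))
        = fun ω => (if Qhat A k s ω ∈ S then (1:ℝ) else 0) - poissonProb lam S :=
      funext fun ω => stein_identity hpos S (Qhat A k s ω)
    have hIfIntegral : ∫ ω, (if Qhat A k s ω ∈ S then (1:ℝ) else 0) ∂μ
        = (μ {ω | Qhat A k s ω ∈ S}).toReal := by
      have hind : (fun ω => if Qhat A k s ω ∈ S then (1:ℝ) else 0)
          = Set.indicator {ω | Qhat A k s ω ∈ S} (fun _ => (1:ℝ)) := by
        funext ω
        rw [Set.indicator_apply]
        simp [Set.mem_setOf_eq]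
      rw [hind, integral_indicator_const (1:ℝ) hSmeas]
      simp
      rfl
    have hLHS : ∫ ω, (lam * g (Qhat A k s ω + 1)
          - (Qhat A k s ω : ℝ) * g (Qhat A k s ω)) ∂μ
        = (μ {ω | Qhat A k s ω ∈ S}).toReal - poissonProb lam S := by
      rw [hstein_pt, integral_sub hIfInt (integrable_const _), hIfIntegral, integral_const]
      simp
    -- the sum-decomposition of the same integral
    have hZgQint : ∀ X : Finset (Fin n),
        Integrable (fun ω => Z A s X ω * g (Qhat A k s ω)) μ := by
      intro X
      refine integrable_of_bounded μ
        ((measurable_Z A hmeas s X).mul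
          ((measurable_of_countable (fun v : ℕ => g v)).comp hQmeas)) ((N : ℝ) + 1)
        (fun ω => ?_)
      rw [abs_mul]
      have h1 : |Z A s X ω| ≤ 1 :=
        abs_le.mpr ⟨by linarith [Z_nonneg A s X ω], Z_le_one A s X ω⟩
      have h2 : |g (Qhat A k s ω)| ≤ (N : ℝ) + 1 := by
        refine le_trans (hGbound _) ?_
        have : ((Qhat A k s ω : ℕ) : ℝ) ≤ (N : ℝ) := by exact_mod_cast hQleN ω
        linarith
      have h3 : (0:ℝ) ≤ |g (Qhat A k s ω)| := abs_nonneg _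
      nlinarith
    have hRHS : ∫ ω, (lam * g (Qhat A k s ω + 1)
          - (Qhat A k s ω : ℝ) * g (Qhat A k s ω)) ∂μ
        = ∑ X ∈ Finset.univ.powersetCard k,
            (pX μ A s X * ∫ ω, g (Qhat A k s ω + 1) ∂μ
              - ∫ ω, Z A s X ω * g (Qhat A k s ω) ∂μ) := by
      rw [integral_sub (hgQ1int.const_mul lam) hQgQint]
      rw [integral_const_mul]
      have hQg : ∫ ω, (Qhat A k s ω : ℝ) * g (Qhat A k s ω) ∂μ
          = ∑ X ∈ Finset.univ.powersetCard k,
              ∫ ω, Z A s X ω * g (Qhat A k s ω) ∂μ := by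
        have hfun : (fun ω => (Qhat A k s ω : ℝ) * g (Qhat A k s ω))
            = fun ω => ∑ X ∈ Finset.univ.powersetCard k,
                Z A s X ω * g (Qhat A k s ω) := by
          funext ω
          rw [Qhat_cast A k s ω, Finset.sum_mul]
        rw [hfun, integral_finset_sum _ (fun X _ => hZgQint X)]
      rw [hQg, hlam_sum, Finset.sum_mul, ← Finset.sum_sub_distrib]
    -- conclusion
    have hmain : (μ {ω | Qhat A k s ω ∈ S}).toReal - poissonProb lam S
        = ∑ X ∈ Finset.univ.powersetCard k,
            (pX μ A s X * ∫ ω, g (Qhat A k s ω + 1) ∂μ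
              - ∫ ω, Z A s X ω * g (Qhat A k s ω) ∂μ) := by
      rw [← hLHS, hRHS]
    rw [hmain]
    calc |∑ X ∈ Finset.univ.powersetCard k,
            (pX μ A s X * ∫ ω, g (Qhat A k s ω + 1) ∂μ
              - ∫ ω, Z A s X ω * g (Qhat A k s ω) ∂μ)|
        ≤ ∑ X ∈ Finset.univ.powersetCard k,
            |pX μ A s X * ∫ ω, g (Qhat A k s ω + 1) ∂μ
              - ∫ ω, Z A s X ω * g (Qhat A k s ω) ∂μ| :=
          Finset.abs_sum_le_sum_abs _ _
      _ ≤ ∑ X ∈ Finset.univ.powersetCard k,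
            ((∑ Y ∈ (Finset.univ.powersetCard k).filter (fun Y => Y ∩ X ≠ ∅),
                pX μ A s X * pX μ A s Y)
              + ∑ Y ∈ (Finset.univ.powersetCard k).filter (fun Y => Y ∩ X ≠ ∅ ∧ Y ≠ X),
                pXY μ A s X Y) := Finset.sum_le_sum key
      _ = b1 μ A k s + b2 μ A k s := by
          rw [b1, b2, ← Finset.sum_add_distrib]


end PaperModel
end
end

section
/- Fix integers k ≥ 2 and s ≥ 2, constants γ > 0 and 0 < c ≤ (k−1)(1−1/s), and consider for each n the random dataset model with common item probability p = γ/n and t = t(n) transactions with t(n) = Θ(n^c). Then b_1(s) = (C(n,k)² − C(n,k)C(n−k,k)) · (Σ_{i=s}^{t} C(t,i) (γ/n)^{ki} (1−(γ/n)^k)^{t−i})², and as n → ∞, b_1(s) = Θ(n^{2cs + 2k(1−s) − 1}). -/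
open MeasureTheory ProbabilityTheory Finset Filter Asymptotics

noncomputable section

namespace PaperModel

variable {Ω : Type*}

section Helpers

lemma row_sum_true {n : ℕ} (X : Finset (Fin n)) (p : ℝ) :
    ∑ r ∈ Finset.univ.filter (fun r : Fin n → Bool => ∀ i ∈ X, r i = true),
      ∏ i, (if r i then p else 1-p) = p ^ X.card := by
  have h1 : Finset.univ.filter (fun r : Fin n → Bool => ∀ i ∈ X, r i = true)
      = Fintype.piFinset (fun i => if i ∈ X then {true} else Finset.univ) := by
    ext r
    simp only [Finset.mem_filter, Finset.mem_univ, true_and, Fintype.mem_piFinset]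
    constructor
    · intro h i
      by_cases hi : i ∈ X <;> simp [hi, h i]
    · intro h i hi
      have := h i
      simpa [hi] using this
  have h2 := Finset.prod_univ_sum (fun i => if i ∈ X then ({true}:Finset Bool) else Finset.univ)
     (fun _ b => if b then p else 1-p)
  rw [h1, ← h2]
  have h3 : ∀ i : Fin n, (∑ b ∈ (if i ∈ X then ({true}:Finset Bool) else Finset.univ),
      (if b then p else 1-p)) = if i ∈ X then p else 1 := by
    intro i
    by_cases hi : i ∈ X <;> simp [hi]
  rw [Finset.prod_congr rfl (fun i _ => h3 i), Finset.prod_ite_mem, Finset.univ_inter,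
    Finset.prod_const]

lemma row_sum_all {n : ℕ} (p : ℝ) :
    ∑ r : Fin n → Bool, ∏ i, (if r i then p else 1-p) = 1 := by
  have h2 := Finset.prod_univ_sum (fun _ : Fin n => (Finset.univ : Finset Bool))
     (fun _ b => if b then p else 1-p)
  rw [← Fintype.piFinset_univ, ← h2]
  have : ∀ i : Fin n, (∑ b : Bool, (if b then p else 1-p)) = 1 := by
    intro i; simp
  rw [Finset.prod_congr rfl (fun i _ => this i), Finset.prod_const, one_pow]

lemma row_sum_false {n : ℕ} (X : Finset (Fin n)) (p : ℝ) :
    ∑ r ∈ Finset.univ.filter (fun r : Fin n → Bool => ¬ ∀ i ∈ X, r i = true),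
      ∏ i, (if r i then p else 1-p) = 1 - p ^ X.card := by
  have := Finset.sum_filter_add_sum_filter_not (Finset.univ : Finset (Fin n → Bool))
    (fun r => ∀ i ∈ X, r i = true) (fun r => ∏ i, (if r i then p else 1-p))
  rw [row_sum_true X p, row_sum_all p] at this
  linarith

lemma comb_main {t n : ℕ} (X : Finset (Fin n)) (p : ℝ) (s : ℕ) :
    ∑ u ∈ Finset.univ.filter (fun u : Fin t → Fin n → Bool =>
        s ≤ (Finset.univ.filter fun j => ∀ i ∈ X, u j i = true).card),
      ∏ j, ∏ i, (if u j i then p else 1-p)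
    = ∑ m ∈ Finset.Icc s t,
        (t.choose m : ℝ) * p ^ (X.card * m) * (1 - p ^ X.card) ^ (t - m) := by
  classical
  set P : (Fin n → Bool) → Prop := fun r => ∀ i ∈ X, r i = true with hP
  set g : (Fin n → Bool) → ℝ := fun r => ∏ i, (if r i then p else 1-p) with hg
  set fib : (Fin t → Fin n → Bool) → Finset (Fin t) :=
    fun u => Finset.univ.filter (fun j => P (u j)) with hfib
  have key : ∀ S : Finset (Fin t),
      ∑ u ∈ Finset.univ.filter (fun u : Fin t → Fin n → Bool => fib u = S),
        ∏ j, g (u j) = (p ^ X.card) ^ S.card * (1 - p ^ X.card) ^ (t - S.card) := by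
    intro S
    have hfibeq : Finset.univ.filter (fun u : Fin t → Fin n → Bool => fib u = S)
        = Fintype.piFinset (fun j => if j ∈ S then Finset.univ.filter P
            else Finset.univ.filter (fun r => ¬ P r)) := by
      ext u
      simp only [Finset.mem_filter, Finset.mem_univ, true_and, Fintype.mem_piFinset, hfib,
        Finset.ext_iff]
      constructor
      · intro h j
        have := h j
        by_cases hj : j ∈ S <;> simp [hj] at this ⊢ <;> simpa using this
      · intro h j
        have := h j
        by_cases hj : j ∈ S <;> simp [hj] at this ⊢ <;> simpa using this
    have h2 := Finset.prod_univ_sum (fun j => if j ∈ S then Finset.univ.filter P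
        else Finset.univ.filter (fun r => ¬ P r)) (fun _ r => g r)
    rw [hfibeq, ← h2]
    have h3 : ∀ j : Fin t, (∑ r ∈ (if j ∈ S then Finset.univ.filter P
        else Finset.univ.filter (fun r => ¬ P r)), g r)
        = if j ∈ S then p ^ X.card else 1 - p ^ X.card := by
      intro j
      by_cases hj : j ∈ S
      · simpa [hj] using row_sum_true X p
      · rw [if_neg hj, if_neg hj]; exact row_sum_false X p
    rw [Finset.prod_congr rfl (fun j _ => h3 j), Finset.prod_ite, Finset.prod_const,
      Finset.prod_const]
    have e1 : Finset.univ.filter (fun j => j ∈ S) = S := by ext j; simp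
    have e2 : Finset.univ.filter (fun j => ¬ j ∈ S) = Sᶜ := by ext j; simp
    rw [e1, e2, Finset.card_compl, Fintype.card_fin]
  -- split the LHS sum along fibers
  have hsplit : ∑ u ∈ Finset.univ.filter (fun u : Fin t → Fin n → Bool =>
        s ≤ (Finset.univ.filter fun j => ∀ i ∈ X, u j i = true).card),
      ∏ j, ∏ i, (if u j i then p else 1-p)
      = ∑ S : Finset (Fin t), if s ≤ S.card then
          (p ^ X.card) ^ S.card * (1 - p ^ X.card) ^ (t - S.card) else 0 := by
    have hmaps : ∀ u ∈ Finset.univ.filter (fun u : Fin t → Fin n → Bool =>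
        s ≤ (fib u).card), fib u ∈ (Finset.univ : Finset (Finset (Fin t))) := by
      intro u _; exact Finset.mem_univ _
    have := Finset.sum_fiberwise_of_maps_to hmaps (fun u => ∏ j, g (u j))
    rw [← this]
    refine Finset.sum_congr rfl (fun S _ => ?_)
    by_cases hS : s ≤ S.card
    · rw [if_pos hS, ← key S]
      apply Finset.sum_congr
      · ext u
        simp only [Finset.mem_filter, Finset.mem_univ, true_and]
        constructor
        · rintro ⟨_, h2⟩; exact h2
        · intro h2; exact ⟨by rw [h2]; exact hS, h2⟩
      · intro u _; rfl
    · rw [if_neg hS]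
      apply Finset.sum_eq_zero
      intro u hu
      simp only [Finset.mem_filter, Finset.mem_univ, true_and] at hu
      exact absurd (hu.2 ▸ hu.1) hS
  rw [hsplit]
  rw [← Finset.powerset_univ, Finset.sum_powerset]
  have hcard : ∀ j ∈ Finset.range ((Finset.univ : Finset (Fin t)).card + 1),
      ∑ S ∈ Finset.powersetCard j (Finset.univ : Finset (Fin t)),
        (if s ≤ S.card then (p ^ X.card) ^ S.card * (1 - p ^ X.card) ^ (t - S.card) else 0)
      = (t.choose j : ℝ) * (if s ≤ j then (p ^ X.card) ^ j * (1 - p ^ X.card) ^ (t - j) else 0) := by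
    intro j _
    rw [Finset.sum_congr rfl (fun S hS => by
      rw [(Finset.mem_powersetCard.mp hS).2]), Finset.sum_const, nsmul_eq_mul,
      Finset.card_powersetCard, Finset.card_univ, Fintype.card_fin]
  rw [Finset.sum_congr rfl hcard]
  rw [Finset.card_univ, Fintype.card_fin]
  rw [← Finset.sum_filter_add_sum_filter_not (Finset.range (t+1)) (fun j => s ≤ j)]
  have hfil : (Finset.range (t+1)).filter (fun j => s ≤ j) = Finset.Icc s t := by
    ext j; simp [Finset.mem_Icc, Finset.mem_filter, Finset.mem_range]; omega
  have h0 : ∑ j ∈ (Finset.range (t+1)).filter (fun j => ¬ s ≤ j),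
      (t.choose j : ℝ) * (if s ≤ j then (p ^ X.card) ^ j * (1 - p ^ X.card) ^ (t - j) else 0) = 0 := by
    apply Finset.sum_eq_zero
    intro j hj
    simp only [Finset.mem_filter] at hj
    rw [if_neg hj.2, mul_zero]
  rw [h0, add_zero, hfil]
  refine Finset.sum_congr rfl (fun m hm => ?_)
  rw [if_pos (Finset.mem_Icc.mp hm).1, ← pow_mul]
  ring

lemma singleton_meas {Ω : Type*} [MeasurableSpace Ω] (μ : Measure Ω) [IsProbabilityMeasure μ]
    (f : Ω → Bool) (hf : Measurable f) {p : ℝ} (hp0 : 0 ≤ p) (hp1 : p ≤ 1)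
    (hA : μ {ω | f ω = true} = ENNReal.ofReal p) (b : Bool) :
    μ {ω | f ω = b} = ENNReal.ofReal (if b then p else 1 - p) := by
  cases b
  · have hc : {ω | f ω = false} = {ω | f ω = true}ᶜ := by
      ext ω; simp
    have hms : MeasurableSet {ω | f ω = true} := hf (measurableSet_singleton true)
    rw [hc, measure_compl hms (measure_ne_top μ _), hA]
    simp only [Bool.false_eq_true, if_false]
    rw [ENNReal.ofReal_sub 1 hp0, ENNReal.ofReal_one, measure_univ]
  · simpa using hA

lemma cylinder_meas {Ω : Type*} [MeasurableSpace Ω] (μ : Measure Ω) [IsProbabilityMeasure μ]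
    {n t : ℕ} (A : Fin t → Fin n → Ω → Bool)
    (hmeas : ∀ j i, Measurable (A j i))
    (hindep : iIndepFun (fun q : Fin t × Fin n => A q.1 q.2) μ)
    {p : ℝ} (hp0 : 0 ≤ p) (hp1 : p ≤ 1)
    (hA : ∀ j i, μ {ω | A j i ω = true} = ENNReal.ofReal p)
    (v : Fin t × Fin n → Bool) :
    μ {ω | ∀ q : Fin t × Fin n, A q.1 q.2 ω = v q}
      = ∏ q : Fin t × Fin n, ENNReal.ofReal (if v q then p else 1 - p) := by
  have hset : {ω | ∀ q : Fin t × Fin n, A q.1 q.2 ω = v q}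
      = ⋂ q : Fin t × Fin n, (fun ω => A q.1 q.2 ω) ⁻¹' {v q} := by
    ext ω; simp [Set.mem_iInter]
  rw [hset, hindep.meas_iInter (fun q => ⟨{v q}, trivial, rfl⟩)]
  refine Finset.prod_congr rfl (fun q _ => ?_)
  have : (fun ω => A q.1 q.2 ω) ⁻¹' {v q} = {ω | A q.1 q.2 ω = v q} := by
    ext ω; simp
  rw [this, singleton_meas μ (A q.1 q.2) (hmeas q.1 q.2) hp0 hp1 (hA q.1 q.2)]

lemma prob_support_ge {Ω : Type*} [MeasurableSpace Ω] (μ : Measure Ω) [IsProbabilityMeasure μ]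
    {n t : ℕ} (A : Fin t → Fin n → Ω → Bool)
    (hmeas : ∀ j i, Measurable (A j i))
    (hindep : iIndepFun (fun q : Fin t × Fin n => A q.1 q.2) μ)
    {p : ℝ} (hp0 : 0 ≤ p) (hp1 : p ≤ 1)
    (hA : ∀ j i, μ {ω | A j i ω = true} = ENNReal.ofReal p)
    (s : ℕ) (X : Finset (Fin n)) :
    μ {ω | s ≤ support A X ω}
      = ∑ v ∈ Finset.univ.filter (fun v : Fin t × Fin n → Bool =>
          s ≤ (Finset.univ.filter fun j : Fin t => ∀ i ∈ X, v (j, i) = true).card),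
        ∏ q : Fin t × Fin n, ENNReal.ofReal (if v q then p else 1 - p) := by
  classical
  set V := Finset.univ.filter (fun v : Fin t × Fin n → Bool =>
      s ≤ (Finset.univ.filter fun j : Fin t => ∀ i ∈ X, v (j, i) = true).card) with hV
  have hdecomp : {ω | s ≤ support A X ω}
      = ⋃ v ∈ V, {ω | ∀ q : Fin t × Fin n, A q.1 q.2 ω = v q} := by
    ext ω
    simp only [Set.mem_setOf_eq, Set.mem_iUnion, exists_prop]
    constructor
    · intro h
      refine ⟨fun q => A q.1 q.2 ω, ?_, fun q => rfl⟩
      rw [hV, Finset.mem_filter]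
      exact ⟨Finset.mem_univ _, h⟩
    · rintro ⟨v, hv, hω⟩
      rw [hV, Finset.mem_filter] at hv
      have : support A X ω
          = (Finset.univ.filter fun j : Fin t => ∀ i ∈ X, v (j, i) = true).card := by
        unfold support
        congr 1
        apply Finset.filter_congr
        intro j _
        constructor
        · intro h i hi; rw [← hω (j, i)]; exact h i hi
        · intro h i hi; rw [hω (j, i)]; exact h i hi
      rw [this]; exact hv.2
  rw [hdecomp, measure_biUnion_finset]
  · exact Finset.sum_congr rfl (fun v _ =>
      cylinder_meas μ A hmeas hindep hp0 hp1 hA v)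
  · intro v hv w hw hvw
    simp only [Function.onFun]
    apply Set.disjoint_left.mpr
    intro ω h1 h2
    apply hvw
    funext q
    rw [← h1 q, ← h2 q]
  · intro v hv
    have : {ω | ∀ q : Fin t × Fin n, A q.1 q.2 ω = v q}
        = ⋂ q : Fin t × Fin n, (A q.1 q.2) ⁻¹' {v q} := by
      ext ω; simp
    rw [this]
    exact MeasurableSet.iInter (fun q => (hmeas q.1 q.2) (measurableSet_singleton _))

lemma pX_eq_binom {Ω : Type*} [MeasurableSpace Ω] (μ : Measure Ω) [IsProbabilityMeasure μ]
    {n t : ℕ} (A : Fin t → Fin n → Ω → Bool)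
    (hmeas : ∀ j i, Measurable (A j i))
    (hindep : iIndepFun (fun q : Fin t × Fin n => A q.1 q.2) μ)
    {p : ℝ} (hp0 : 0 ≤ p) (hp1 : p ≤ 1)
    (hA : ∀ j i, μ {ω | A j i ω = true} = ENNReal.ofReal p)
    (s : ℕ) (X : Finset (Fin n)) :
    (μ {ω | s ≤ support A X ω}).toReal
      = ∑ m ∈ Finset.Icc s t,
          (t.choose m : ℝ) * p ^ (X.card * m) * (1 - p ^ X.card) ^ (t - m) := by
  classical
  have hw : ∀ b : Bool, 0 ≤ (if b then p else 1 - p) := by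
    intro b; cases b
    · simpa using sub_nonneg.mpr hp1
    · simpa using hp0
  rw [prob_support_ge μ A hmeas hindep hp0 hp1 hA s X]
  rw [ENNReal.toReal_sum (fun v _ => by
    exact ENNReal.prod_ne_top (fun q _ => ENNReal.ofReal_ne_top))]
  have hterm : ∀ v : Fin t × Fin n → Bool,
      (∏ q : Fin t × Fin n, ENNReal.ofReal (if v q then p else 1 - p)).toReal
      = ∏ q : Fin t × Fin n, (if v q then p else 1 - p) := by
    intro v
    rw [ENNReal.toReal_prod]
    exact Finset.prod_congr rfl (fun q _ => ENNReal.toReal_ofReal (hw _))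
  rw [Finset.sum_congr rfl (fun v _ => hterm v)]
  rw [← comb_main X p s]
  refine Finset.sum_nbij' (fun v : Fin t × Fin n → Bool => fun j i => v (j, i))
    (fun u : Fin t → Fin n → Bool => fun q => u q.1 q.2) ?_ ?_ ?_ ?_ ?_
  · intro v hv
    simp only [Finset.mem_filter, Finset.mem_univ, true_and] at hv ⊢
    exact hv
  · intro u hu
    simp only [Finset.mem_filter, Finset.mem_univ, true_and] at hu ⊢
    exact hu
  · intro v _; rfl
  · intro u _; rfl
  · intro v _
    exact Fintype.prod_prod_type _

lemma isTheta_of_bounds {f g : ℕ → ℝ} {c₁ c₂ : ℝ} (h₁ : 0 < c₁)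
    (hg0 : ∀ᶠ n in atTop, 0 ≤ g n)
    (hlow : ∀ᶠ n in atTop, c₁ * g n ≤ f n)
    (hup : ∀ᶠ n in atTop, f n ≤ c₂ * g n) :
    f =Θ[atTop] g := by
  constructor
  · apply IsBigO.of_bound c₂
    filter_upwards [hg0, hlow, hup] with n h0 hl hu
    have hf0 : 0 ≤ f n := le_trans (by positivity) hl
    rwa [Real.norm_of_nonneg hf0, Real.norm_of_nonneg h0]
  · apply IsBigO.of_bound (1/c₁)
    filter_upwards [hg0, hlow, hup] with n h0 hl hu
    have hf0 : 0 ≤ f n := le_trans (by positivity) hl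
    rw [Real.norm_of_nonneg h0, Real.norm_of_nonneg hf0]
    rw [div_mul_eq_mul_div, le_div_iff₀ h₁]
    linarith

lemma geom_tail (r : ℝ) (h0 : 0 ≤ r) (h : r ≤ 1/2) (s T : ℕ) :
    ∑ m ∈ Finset.Icc s T, r ^ m ≤ 2 * r ^ s := by
  have step1 : ∑ m ∈ Finset.Icc s T, r ^ m
      ≤ ∑ m ∈ Finset.Icc s T, r ^ s * (1/2 : ℝ) ^ (m - s) := by
    apply Finset.sum_le_sum
    intro m hm
    have hms : s ≤ m := (Finset.mem_Icc.mp hm).1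
    calc r ^ m = r ^ s * r ^ (m - s) := by rw [← pow_add]; congr 1; omega
    _ ≤ r ^ s * (1/2:ℝ) ^ (m - s) := by
        apply mul_le_mul_of_nonneg_left _ (by positivity)
        exact pow_le_pow_left₀ h0 h _
  have step2 : ∑ m ∈ Finset.Icc s T, ((1/2 : ℝ)) ^ (m - s)
      = ∑ j ∈ Finset.range (T + 1 - s), (1/2 : ℝ) ^ j := by
    apply Finset.sum_nbij' (fun m => m - s) (fun j => s + j)
    · intro m hm; simp only [Finset.mem_Icc] at hm; simp only [Finset.mem_range]; omega
    · intro j hj; simp only [Finset.mem_range] at hj; simp only [Finset.mem_Icc]; omega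
    · intro m hm; simp only [Finset.mem_Icc] at hm; omega
    · intro j hj; simp only [Finset.mem_range] at hj; omega
    · intro m hm; rfl
  have step3 : ∑ j ∈ Finset.range (T + 1 - s), (1/2 : ℝ) ^ j ≤ 2 := by
    have := geom_sum_eq (by norm_num : (1/2 : ℝ) ≠ 1) (T + 1 - s)
    rw [this]
    have h1 : (0:ℝ) ≤ (1/2 : ℝ) ^ (T + 1 - s) := by positivity
    have h2 : ((1/2:ℝ) ^ (T + 1 - s) - 1) / (1/2 - 1) = 2 * (1 - (1/2:ℝ) ^ (T+1-s)) := by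
      ring
    rw [h2]; linarith
  calc ∑ m ∈ Finset.Icc s T, r ^ m ≤ ∑ m ∈ Finset.Icc s T, r ^ s * (1/2 : ℝ) ^ (m - s) := step1
  _ = r ^ s * ∑ m ∈ Finset.Icc s T, ((1/2 : ℝ)) ^ (m - s) := by rw [Finset.mul_sum]
  _ ≤ r ^ s * 2 := by
      apply mul_le_mul_of_nonneg_left _ (by positivity)
      rw [step2]; exact step3
  _ = 2 * r ^ s := by ring

lemma q_isTheta {k s : ℕ} (hk : 1 ≤ k) (hs : 1 ≤ s) {γ : ℝ} (hγ : 0 < γ)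
    {c : ℝ} (hc0 : 0 < c) (hck : c < k) (t : ℕ → ℕ)
    (htΘ : (fun n => (t n : ℝ)) =Θ[atTop] fun n => (n : ℝ) ^ c) :
    (fun n : ℕ => ∑ m ∈ Finset.Icc s (t n),
        ((t n).choose m : ℝ) * (γ/n)^(k*m) * (1-(γ/n)^k)^(t n - m))
      =Θ[atTop] fun n : ℕ => ((n:ℝ) ^ (c - (k:ℝ))) ^ s := by
  -- extract constants from htΘ
  obtain ⟨a₂, ha₂, hbound₂⟩ := htΘ.1.exists_pos
  obtain ⟨a₃, ha₃, hbound₃⟩ := htΘ.2.exists_pos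
  rw [IsBigOWith] at hbound₂ hbound₃
  -- basic eventual facts
  have hnpos : ∀ᶠ n : ℕ in atTop, (1:ℝ) ≤ (n:ℝ) := by
    filter_upwards [eventually_ge_atTop 1] with n hn
    exact_mod_cast hn
  have hγn : ∀ᶠ n : ℕ in atTop, γ ≤ (n:ℝ) := by
    have := tendsto_natCast_atTop_atTop (R := ℝ)
    exact this.eventually_ge_atTop γ
  -- upper/lower bounds for t n
  have ht_up : ∀ᶠ n : ℕ in atTop, (t n : ℝ) ≤ a₂ * (n:ℝ) ^ c := by
    filter_upwards [hbound₂, hnpos] with n h hn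
    have h1 : (0:ℝ) < (n:ℝ) := by linarith
    rwa [Real.norm_of_nonneg (by positivity), Real.norm_of_nonneg (Real.rpow_nonneg (by positivity) c)] at h
  have ht_low : ∀ᶠ n : ℕ in atTop, (1/a₃) * (n:ℝ) ^ c ≤ (t n : ℝ) := by
    filter_upwards [hbound₃, hnpos] with n h hn
    have h1 : (0:ℝ) < (n:ℝ) := by linarith
    rw [Real.norm_of_nonneg (Real.rpow_nonneg (by positivity) c),
      Real.norm_of_nonneg (by positivity)] at h
    rw [div_mul_eq_mul_div, div_le_iff₀ ha₃]
    linarith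
  -- t tends to infinity
  have hrpow_top : Tendsto (fun n : ℕ => (n:ℝ) ^ c) atTop atTop :=
    (tendsto_rpow_atTop hc0).comp tendsto_natCast_atTop_atTop
  have ht_top : Tendsto (fun n => (t n : ℝ)) atTop atTop := by
    apply tendsto_atTop_mono' atTop ht_low
    exact hrpow_top.const_mul_atTop (r := 1/a₃) (by positivity)
  have ht_ge : ∀ᶠ n : ℕ in atTop, (2*s : ℝ) ≤ (t n : ℝ) := ht_top.eventually_ge_atTop _
  -- r n := t n * (γ/n)^k  and its bounds
  set r : ℕ → ℝ := fun n => (t n : ℝ) * (γ/n)^k with hr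
  have key : ∀ n:ℕ, (1:ℝ) ≤ (n:ℝ) → ∀ b:ℝ, (b * (n:ℝ)^c) * (γ/(n:ℝ))^k
      = (b*γ^k) * (n:ℝ)^(c-(k:ℝ)) := by
    intro n hn b
    have h1 : (0:ℝ) < (n:ℝ) := by linarith
    have h2 : (n:ℝ)^(c-(k:ℝ)) = (n:ℝ)^c / (n:ℝ)^(k:ℕ) := by
      rw [Real.rpow_sub h1, Real.rpow_natCast]
    rw [div_pow, h2]
    have h3 : ((n:ℝ))^(k:ℕ) ≠ 0 := by positivity
    field_simp
  have hr_up : ∀ᶠ n : ℕ in atTop, r n ≤ (a₂ * γ^k) * (n:ℝ) ^ (c - (k:ℝ)) := by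
    filter_upwards [ht_up, hnpos] with n h hn
    have h1 : (0:ℝ) < (n:ℝ) := by linarith
    rw [hr]; simp only
    rw [← key n hn a₂]
    apply mul_le_mul_of_nonneg_right h (by positivity)
  have hr_low : ∀ᶠ n : ℕ in atTop, ((1/a₃) * γ^k) * (n:ℝ) ^ (c - (k:ℝ)) ≤ r n := by
    filter_upwards [ht_low, hnpos] with n h hn
    have h1 : (0:ℝ) < (n:ℝ) := by linarith
    rw [hr]; simp only
    rw [← key n hn (1/a₃)]
    apply mul_le_mul_of_nonneg_right h (by positivity)
  have hr_nonneg : ∀ᶠ n : ℕ in atTop, 0 ≤ r n := by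
    filter_upwards [hnpos] with n hn
    have h1 : (0:ℝ) < (n:ℝ) := by linarith
    positivity
  -- r tends to 0
  have hr_to0 : Tendsto r atTop (nhds 0) := by
    have hneg : Tendsto (fun n : ℕ => (n:ℝ) ^ (c - (k:ℝ))) atTop (nhds 0) := by
      have h4 : Tendsto (fun x : ℝ => x ^ (c - (k:ℝ))) atTop (nhds 0) := by
        have h5 := tendsto_rpow_neg_atTop (y := (k:ℝ) - c) (by linarith)
        convert h5 using 2 with x
        rw [neg_sub]
      exact h4.comp tendsto_natCast_atTop_atTop
    have h2 : Tendsto (fun n : ℕ => (a₂ * γ^k) * (n:ℝ) ^ (c - (k:ℝ))) atTop (nhds 0) := by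
      simpa using hneg.const_mul (a₂ * γ^k)
    apply squeeze_zero' hr_nonneg hr_up h2
  have hr_half : ∀ᶠ n : ℕ in atTop, r n ≤ 1/2 :=
    hr_to0.eventually (eventually_le_nhds (by norm_num))
  -- q upper bound
  have hq_up : ∀ᶠ n : ℕ in atTop,
      (∑ m ∈ Finset.Icc s (t n), ((t n).choose m : ℝ) * (γ/n)^(k*m) * (1-(γ/n)^k)^(t n - m))
      ≤ 2 * r n ^ s := by
    filter_upwards [hγn, hnpos, hr_half, hr_nonneg] with n hγle hn hhalf hrpos
    have h1 : (0:ℝ) < (n:ℝ) := by linarith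
    have hp0 : (0:ℝ) ≤ γ/(n:ℝ) := by positivity
    have hp1 : γ/(n:ℝ) ≤ 1 := by rw [div_le_one h1]; exact hγle
    have hpk0 : (0:ℝ) ≤ (γ/(n:ℝ))^k := pow_nonneg hp0 k
    have hpk1 : (γ/(n:ℝ))^k ≤ 1 := pow_le_one₀ hp0 hp1
    have step : ∀ m ∈ Finset.Icc s (t n),
        ((t n).choose m : ℝ) * (γ/n)^(k*m) * (1-(γ/n)^k)^(t n - m) ≤ r n ^ m := by
      intro m hm
      have hch : ((t n).choose m : ℝ) ≤ (t n : ℝ)^m := by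
        exact_mod_cast Nat.choose_le_pow (t n) m
      have h2 : (1-(γ/n)^k)^(t n - m) ≤ 1 := pow_le_one₀ (by linarith) (by linarith)
      have h2' : (0:ℝ) ≤ (1-(γ/n)^k)^(t n - m) := pow_nonneg (by linarith) _
      have h3 : (γ/(n:ℝ))^(k*m) = ((γ/(n:ℝ))^k)^m := by rw [pow_mul]
      have h4 : ((t n).choose m : ℝ) * (γ/n)^(k*m) * (1-(γ/n)^k)^(t n - m)
          ≤ ((t n : ℝ)^m * (γ/n)^(k*m)) * 1 := by
        apply mul_le_mul (mul_le_mul_of_nonneg_right hch (by positivity)) h2 h2' (by positivity)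
      refine h4.trans (le_of_eq ?_)
      rw [mul_one, h3, hr]; simp only
      rw [mul_pow]
    calc (∑ m ∈ Finset.Icc s (t n),
          ((t n).choose m : ℝ) * (γ/n)^(k*m) * (1-(γ/n)^k)^(t n - m))
        ≤ ∑ m ∈ Finset.Icc s (t n), r n ^ m := Finset.sum_le_sum step
    _ ≤ 2 * r n ^ s := geom_tail (r n) hrpos hhalf s (t n)
  -- q lower bound
  have hfacpos : (0:ℝ) < (Nat.factorial s : ℝ) := by exact_mod_cast Nat.factorial_pos s
  have hq_low : ∀ᶠ n : ℕ in atTop,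
      (1/(2^(s+1) * (Nat.factorial s : ℝ))) * r n ^ s
      ≤ (∑ m ∈ Finset.Icc s (t n),
          ((t n).choose m : ℝ) * (γ/n)^(k*m) * (1-(γ/n)^k)^(t n - m)) := by
    filter_upwards [hγn, hnpos, hr_half, hr_nonneg, ht_ge] with n hγle hn hhalf hrpos htge
    have h1 : (0:ℝ) < (n:ℝ) := by linarith
    have hp0 : (0:ℝ) ≤ γ/(n:ℝ) := by positivity
    have hp1 : γ/(n:ℝ) ≤ 1 := by rw [div_le_one h1]; exact hγle
    have hpk0 : (0:ℝ) ≤ (γ/(n:ℝ))^k := pow_nonneg hp0 k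
    have hpk1 : (γ/(n:ℝ))^k ≤ 1 := pow_le_one₀ hp0 hp1
    have hts : 2*s ≤ t n := by exact_mod_cast htge
    have hmem : s ∈ Finset.Icc s (t n) := Finset.mem_Icc.mpr ⟨le_refl s, by omega⟩
    have hnonneg : ∀ m ∈ Finset.Icc s (t n),
        0 ≤ ((t n).choose m : ℝ) * (γ/n)^(k*m) * (1-(γ/n)^k)^(t n - m) := by
      intro m _
      have := pow_nonneg (show (0:ℝ) ≤ 1-(γ/n)^k by linarith) (t n - m)
      positivity
    have hsingle := Finset.single_le_sum hnonneg hmem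
    have hC : ((t n : ℝ)/2)^s / (Nat.factorial s : ℝ) ≤ ((t n).choose s : ℝ) := by
      refine le_trans ?_ (Nat.pow_le_choose s (t n))
      apply div_le_div_of_nonneg_right ?_ hfacpos.le
      have h6 : (t n : ℝ)/2 ≤ ((t n + 1 - s : ℕ) : ℝ) := by
        rw [Nat.cast_sub (by omega)]
        push_cast
        have : (s:ℝ) ≥ 1 := by exact_mod_cast hs
        have : (2*(s:ℝ)) ≤ (t n : ℝ) := by exact_mod_cast htge
        linarith
      exact pow_le_pow_left₀ (by positivity) h6 s
    have hBern : (1:ℝ)/2 ≤ (1-(γ/n)^k)^(t n - s) := by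
      have h5 := one_add_mul_le_pow (a := -(γ/n)^k) (by linarith) (t n - s)
      have h6 : ((t n - s : ℕ):ℝ) * (γ/n)^k ≤ r n := by
        rw [hr]; simp only
        apply mul_le_mul_of_nonneg_right _ hpk0
        exact_mod_cast Nat.sub_le (t n) s
      have h7 : 1 + ((t n - s : ℕ):ℝ) * (-(γ/n)^k) = 1 - ((t n - s : ℕ):ℝ) * (γ/n)^k := by ring
      rw [h7] at h5
      have h8 : (1:ℝ) - (γ/(n:ℝ))^k + -(γ/(n:ℝ))^k  = 1 - 2*(γ/n)^k := by ring
      calc (1:ℝ)/2 ≤ 1 - r n := by linarith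
      _ ≤ 1 - ((t n - s : ℕ):ℝ) * (γ/n)^k := by linarith
      _ ≤ (1 + -(γ/n)^k)^(t n - s) := h5
      _ = (1-(γ/n)^k)^(t n - s) := by rw [← sub_eq_add_neg]
    have heq : (1/(2^(s+1) * (Nat.factorial s : ℝ))) * r n ^ s
        = (((t n : ℝ)/2)^s / (Nat.factorial s : ℝ)) * (γ/n)^(k*s) * (1/2) := by
      rw [hr]; simp only
      field_simp
      have h2s : ((1:ℝ)/2)^s * 2^s = 1 := by rw [← mul_pow]; norm_num
      linear_combination (-((t n : ℝ) ^ s * γ ^ (k * s) * ((n:ℝ))⁻¹ ^ (k * s) * 2)) * h2s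
    rw [heq]
    refine le_trans ?_ hsingle
    apply mul_le_mul ?_ hBern (by norm_num) ?_
    · exact mul_le_mul_of_nonneg_right hC (by positivity)
    · positivity
  -- conclude
  have hc₁pos : (0:ℝ) < (1/(2^(s+1) * (Nat.factorial s : ℝ))) * ((1/a₃)*γ^k)^s := by positivity
  apply isTheta_of_bounds hc₁pos
  · filter_upwards [hnpos] with n hn
    have h1 : (0:ℝ) < (n:ℝ) := by linarith
    positivity
  · filter_upwards [hq_low, hr_low, hnpos] with n hql hrl hn
    have h1 : (0:ℝ) < (n:ℝ) := by linarith
    have hg0 : (0:ℝ) ≤ (n:ℝ) ^ (c-(k:ℝ)) := Real.rpow_nonneg (by positivity) _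
    have h2 : (((1/a₃)*γ^k) * (n:ℝ)^(c-(k:ℝ)))^s ≤ r n ^ s :=
      pow_le_pow_left₀ (by positivity) hrl s
    rw [mul_pow] at h2
    calc (1/(2^(s+1) * (Nat.factorial s : ℝ))) * ((1/a₃)*γ^k)^s * ((n:ℝ)^(c-(k:ℝ)))^s
        = (1/(2^(s+1) * (Nat.factorial s : ℝ))) * (((1/a₃)*γ^k)^s * ((n:ℝ)^(c-(k:ℝ)))^s) := by ring
    _ ≤ (1/(2^(s+1) * (Nat.factorial s : ℝ))) * r n ^ s := by
        apply mul_le_mul_of_nonneg_left h2 (by positivity)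
    _ ≤ _ := hql
  · filter_upwards [hq_up, hr_up, hr_nonneg, hnpos] with n hqu hru hrpos hn
    have h1 : (0:ℝ) < (n:ℝ) := by linarith
    have h2 : r n ^ s ≤ ((a₂*γ^k) * (n:ℝ)^(c-(k:ℝ)))^s := pow_le_pow_left₀ hrpos hru s
    rw [mul_pow (a₂*γ^k) ((n:ℝ)^(c-(k:ℝ))) s] at h2
    calc (∑ m ∈ Finset.Icc s (t n),
          ((t n).choose m : ℝ) * (γ/n)^(k*m) * (1-(γ/n)^k)^(t n - m))
        ≤ 2 * r n ^ s := hqu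
    _ ≤ 2 * ((a₂*γ^k)^s * ((n:ℝ)^(c-(k:ℝ)))^s) := by
        apply mul_le_mul_of_nonneg_left h2 (by norm_num)
    _ = (2 * (a₂*γ^k)^s) * ((n:ℝ)^(c-(k:ℝ)))^s := by ring

lemma tele (m : ℕ) : ∀ b a : ℕ, (a + b).choose (m+1) - a.choose (m+1)
    = ∑ j ∈ Finset.range b, (a+j).choose m := by
  intro b
  induction b with
  | zero => intro a; simp
  | succ b ih =>
    intro a
    have h1 : a + (b+1) = (a + b) + 1 := by omega
    rw [h1, Nat.choose_succ_succ (a+b) m, Finset.sum_range_succ, ← ih a]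
    have h2 : a.choose (m+1) ≤ (a+b).choose (m+1) := Nat.choose_le_choose _ (by omega)
    simp only [Nat.succ_eq_add_one] at *
    omega

lemma D_bounds {k : ℕ} (hk : 1 ≤ k) {n : ℕ} (hn : k ≤ n) :
    k * ((n-k).choose (k-1)) ≤ n.choose k - (n-k).choose k ∧
    n.choose k - (n-k).choose k ≤ k * (n.choose (k-1)) := by
  obtain ⟨m, rfl⟩ : ∃ m, k = m + 1 := ⟨k - 1, by omega⟩
  have h1 : n = (n - (m+1)) + (m+1) := by omega
  have h2 := tele m (m+1) (n - (m+1))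
  rw [← h1] at h2
  constructor
  · rw [h2]
    have : ∀ j ∈ Finset.range (m+1), (n-(m+1)).choose ((m+1)-1) ≤ (n-(m+1)+j).choose m := by
      intro j _
      simpa using Nat.choose_le_choose m (Nat.le_add_right _ j)
    calc (m+1) * ((n-(m+1)).choose ((m+1)-1))
        = ∑ _j ∈ Finset.range (m+1), (n-(m+1)).choose ((m+1)-1) := by
          rw [Finset.sum_const, Finset.card_range, smul_eq_mul]
    _ ≤ ∑ j ∈ Finset.range (m+1), (n-(m+1)+j).choose m := Finset.sum_le_sum this
  · rw [h2]
    have : ∀ j ∈ Finset.range (m+1), (n-(m+1)+j).choose m ≤ n.choose ((m+1)-1) := by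
      intro j hj
      simp only [Finset.mem_range] at hj
      simpa using Nat.choose_le_choose m (show n-(m+1)+j ≤ n by omega)
    calc ∑ j ∈ Finset.range (m+1), (n-(m+1)+j).choose m
        ≤ ∑ _j ∈ Finset.range (m+1), n.choose ((m+1)-1) := Finset.sum_le_sum this
    _ = (m+1) * (n.choose ((m+1)-1)) := by
          rw [Finset.sum_const, Finset.card_range, smul_eq_mul]

lemma choose_real_lower {k n : ℕ} (hn : 2*k ≤ n) :
    ((n:ℝ)/2)^k / (Nat.factorial k : ℝ) ≤ (n.choose k : ℝ) := by
  have hf : (0:ℝ) ≤ (Nat.factorial k : ℝ) := by positivity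
  refine le_trans ?_ (Nat.pow_le_choose k n)
  apply div_le_div_of_nonneg_right ?_ hf
  have h6 : (n : ℝ)/2 ≤ ((n + 1 - k : ℕ) : ℝ) := by
    rw [Nat.cast_sub (by omega)]
    push_cast
    have h7 : (2*(k:ℝ)) ≤ (n : ℝ) := by exact_mod_cast hn
    linarith
  exact pow_le_pow_left₀ (by positivity) h6 k

lemma N_isTheta {k : ℕ} (hk : 1 ≤ k) :
    (fun n : ℕ => ((n.choose k : ℝ))^2 - (n.choose k : ℝ) * (((n-k).choose k : ℝ)))
      =Θ[atTop] fun n : ℕ => ((n:ℝ)) ^ (2*k-1 : ℕ) := by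
  have hfk : (0:ℝ) < (Nat.factorial k : ℝ) := by exact_mod_cast Nat.factorial_pos k
  have hfk1 : (0:ℝ) < (Nat.factorial (k-1) : ℝ) := by exact_mod_cast Nat.factorial_pos (k-1)
  have hNeq : ∀ n : ℕ, k ≤ n → ((n.choose k : ℝ))^2 - (n.choose k : ℝ) * (((n-k).choose k : ℝ))
      = (n.choose k : ℝ) * ((n.choose k - (n-k).choose k : ℕ) : ℝ) := by
    intro n hn
    rw [Nat.cast_sub (Nat.choose_le_choose k (Nat.sub_le n k))]
    ring
  apply isTheta_of_bounds
    (c₁ := (1/(Nat.factorial k : ℝ)) * ((k:ℝ)/(Nat.factorial (k-1) : ℝ)) * (1/2^(3*k-2)))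
    (c₂ := (k:ℝ))
  · positivity
  · filter_upwards [eventually_ge_atTop 1] with n hn
    positivity
  · filter_upwards [eventually_ge_atTop (4*k)] with n hn
    have hkn : k ≤ n := by omega
    rw [hNeq n hkn]
    have hD := (D_bounds hk hkn).1
    have hnR : (0:ℝ) ≤ (n:ℝ) := by positivity
    -- lower bound each factor
    have hC : ((n:ℝ)/2)^k / (Nat.factorial k : ℝ) ≤ (n.choose k : ℝ) :=
      choose_real_lower (by omega)
    have hC2 : ((n:ℝ)/4)^(k-1) * ((k:ℝ)/(Nat.factorial (k-1) : ℝ))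
        ≤ ((n.choose k - (n-k).choose k : ℕ) : ℝ) := by
      have hD' : ((k * ((n-k).choose (k-1)) : ℕ) : ℝ)
          ≤ ((n.choose k - (n-k).choose k : ℕ) : ℝ) := by exact_mod_cast hD
      refine le_trans ?_ hD'
      push_cast
      have hC3 : (((n-k:ℕ):ℝ)/2)^(k-1) / (Nat.factorial (k-1) : ℝ) ≤ ((n-k).choose (k-1) : ℝ) :=
        choose_real_lower (by omega)
      have h4 : ((n:ℝ)/4) ≤ ((n-k:ℕ):ℝ)/2 := by
        rw [Nat.cast_sub hkn]
        have : (k:ℝ) ≤ (n:ℝ)/2 := by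
          have : (4*(k:ℝ)) ≤ n := by exact_mod_cast hn
          linarith
        linarith
      have h5 : ((n:ℝ)/4)^(k-1) ≤ (((n-k:ℕ):ℝ)/2)^(k-1) :=
        pow_le_pow_left₀ (by positivity) h4 _
      calc ((n:ℝ)/4)^(k-1) * ((k:ℝ)/(Nat.factorial (k-1) : ℝ))
          ≤ (((n-k:ℕ):ℝ)/2)^(k-1) * ((k:ℝ)/(Nat.factorial (k-1) : ℝ)) := by
            apply mul_le_mul_of_nonneg_right h5 (by positivity)
      _ = (k:ℝ) * ((((n-k:ℕ):ℝ)/2)^(k-1) / (Nat.factorial (k-1) : ℝ)) := by ring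
      _ ≤ (k:ℝ) * ((n-k).choose (k-1) : ℝ) := by
            apply mul_le_mul_of_nonneg_left hC3 (by positivity)
    calc (1/(Nat.factorial k : ℝ)) * ((k:ℝ)/(Nat.factorial (k-1) : ℝ)) * (1/2^(3*k-2))
          * (n:ℝ)^(2*k-1 : ℕ)
        = (((n:ℝ)/2)^k / (Nat.factorial k : ℝ))
          * (((n:ℝ)/4)^(k-1) * ((k:ℝ)/(Nat.factorial (k-1) : ℝ))) := by
          rw [div_pow, div_pow]
          have e1 : (n:ℝ)^k * (n:ℝ)^(k-1) = (n:ℝ)^(2*k-1:ℕ) := by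
            rw [← pow_add]; congr 1; omega
          have e2 : ((2:ℝ)^k * (4:ℝ)^(k-1)) = 2^(3*k-2:ℕ) := by
            rw [show (4:ℝ) = 2^2 by norm_num, ← pow_mul, ← pow_add]
            congr 1; omega
          field_simp
          rw [← e1, ← e2]
          ring
    _ ≤ (n.choose k : ℝ) * ((n.choose k - (n-k).choose k : ℕ) : ℝ) := by
          apply mul_le_mul hC hC2 ?_ ?_
          · positivity
          · positivity
  · filter_upwards [eventually_ge_atTop k] with n hkn
    rw [hNeq n hkn]
    have hD := (D_bounds hk hkn).2
    have h1 : (n.choose k : ℝ) ≤ (n:ℝ)^k := by exact_mod_cast Nat.choose_le_pow n k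
    have h2 : ((n.choose k - (n-k).choose k : ℕ) : ℝ) ≤ (k:ℝ) * (n:ℝ)^(k-1) := by
      calc ((n.choose k - (n-k).choose k : ℕ) : ℝ) ≤ ((k * (n.choose (k-1)) : ℕ) : ℝ) := by
            exact_mod_cast hD
      _ = (k:ℝ) * (n.choose (k-1) : ℝ) := by push_cast; ring
      _ ≤ (k:ℝ) * (n:ℝ)^(k-1) := by
            apply mul_le_mul_of_nonneg_left ?_ (by positivity)
            exact_mod_cast Nat.choose_le_pow n (k-1)
    calc (n.choose k : ℝ) * ((n.choose k - (n-k).choose k : ℕ) : ℝ)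
        ≤ (n:ℝ)^k * ((k:ℝ) * (n:ℝ)^(k-1)) := by
          apply mul_le_mul h1 h2 ?_ ?_
          · positivity
          · positivity
    _ = (k:ℝ) * (n:ℝ)^(2*k-1:ℕ) := by
          rw [show (n:ℝ)^k * ((k:ℝ) * (n:ℝ)^(k-1)) = (k:ℝ)*((n:ℝ)^k * (n:ℝ)^(k-1)) by ring,
            ← pow_add]
          congr 2
          omega

end Helpers


lemma count_inter {n k : ℕ} {X : Finset (Fin n)} (hX : X ∈ Finset.univ.powersetCard k) :
    ((Finset.univ.powersetCard k).filter (fun Y : Finset (Fin n) => Y ∩ X ≠ ∅)).card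
      = n.choose k - (n-k).choose k := by
  classical
  have hXc : X.card = k := (Finset.mem_powersetCard.mp hX).2
  have htotal : ((Finset.univ : Finset (Fin n)).powersetCard k).card = n.choose k := by
    rw [Finset.card_powersetCard, Finset.card_univ, Fintype.card_fin]
  have hneg : (Finset.univ.powersetCard k).filter (fun Y : Finset (Fin n) => ¬ Y ∩ X ≠ ∅)
      = Xᶜ.powersetCard k := by
    ext Y
    simp only [Finset.mem_filter, Finset.mem_powersetCard, not_not, Finset.subset_iff,
      Finset.mem_univ, Finset.mem_compl, Finset.eq_empty_iff_forall_notMem, Finset.mem_inter]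
    constructor
    · rintro ⟨⟨_, hc⟩, hint⟩
      refine ⟨fun {y} hy => ?_, hc⟩
      intro hyX
      exact hint y ⟨hy, hyX⟩
    · rintro ⟨hsub, hc⟩
      refine ⟨⟨fun {y} _ => trivial, hc⟩, fun y hy => hsub hy.1 hy.2⟩
  have hnegcard : (Xᶜ.powersetCard k).card = (n-k).choose k := by
    rw [Finset.card_powersetCard, Finset.card_compl, hXc, Fintype.card_fin]
  have hsplit := Finset.card_filter_add_card_filter_not
    (s := Finset.univ.powersetCard k) (p := fun Y : Finset (Fin n) => Y ∩ X ≠ ∅)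
  rw [hneg, hnegcard, htotal] at hsplit
  omega

/-- **Exact formula and asymptotics for `b₁(s)` in the fixed-`p` model.**
Fix `k, s ≥ 2`, `γ > 0` and `0 < c ≤ (k−1)(1−1/s)`; consider for each `n` the random dataset
model with common item probability `p = γ/n` and `t(n) = Θ(n^c)` transactions. Then
`b₁(s) = (C(n,k)² − C(n,k)C(n−k,k)) · (Σ_{i=s}^{t} C(t,i) (γ/n)^{ki} (1−(γ/n)^k)^{t−i})²`,
and as `n → ∞`, `b₁(s) = Θ(n^{2cs + 2k(1−s) − 1})`. -/
theorem b1_formula_and_isTheta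
    {k s : ℕ} (hk : 2 ≤ k) (hs : 2 ≤ s)
    (γ : ℝ) (hγ : 0 < γ)
    (c : ℝ) (hc0 : 0 < c) (hc : c ≤ ((k : ℝ) - 1) * (1 - 1 / (s : ℝ)))
    {Ω : ℕ → Type*} [∀ n, MeasurableSpace (Ω n)]
    (μ : ∀ n, Measure (Ω n)) [∀ n, IsProbabilityMeasure (μ n)]
    (t : ℕ → ℕ)
    (htΘ : (fun n => (t n : ℝ)) =Θ[atTop] fun n => (n : ℝ) ^ c)
    (A : ∀ n, Fin (t n) → Fin n → Ω n → Bool)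
    (hmeas : ∀ n j i, Measurable (A n j i))
    (hindep : ∀ n, iIndepFun
      (fun p : Fin (t n) × Fin n => A n p.1 p.2) (μ n))
    (hfreq : ∀ n : ℕ, γ ≤ n → ∀ j i,
      μ n {ω | A n j i ω = true} = ENNReal.ofReal (γ / n)) :
    (∀ n : ℕ, γ ≤ n →
      b1 (μ n) (A n) k s
        = (((n.choose k : ℝ)) ^ 2 - (n.choose k : ℝ) * (((n - k).choose k : ℝ)))
          * (∑ i ∈ Finset.Icc s (t n),
              ((t n).choose i : ℝ) * (γ / n) ^ (k * i)
                * (1 - (γ / n) ^ k) ^ (t n - i)) ^ 2) ∧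
    (fun n => b1 (μ n) (A n) k s)
      =Θ[atTop] fun n =>
        (n : ℝ) ^ (2 * c * (s : ℝ) + 2 * (k : ℝ) * (1 - (s : ℝ)) - 1) := by
  classical
  -- notation
  set q : ℕ → ℝ := fun n => ∑ i ∈ Finset.Icc s (t n),
      ((t n).choose i : ℝ) * (γ / n) ^ (k * i) * (1 - (γ / n) ^ k) ^ (t n - i) with hqdef
  set N : ℕ → ℝ := fun n =>
      ((n.choose k : ℝ)) ^ 2 - (n.choose k : ℝ) * (((n - k).choose k : ℝ)) with hNdef
  have formula : ∀ n : ℕ, γ ≤ n → b1 (μ n) (A n) k s = N n * (q n) ^ 2 := by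
    intro n hγn
    have hn1 : (0:ℝ) < (n:ℝ) := lt_of_lt_of_le hγ hγn
    have hp0 : (0:ℝ) ≤ γ / n := by positivity
    have hp1 : γ / (n:ℝ) ≤ 1 := by rw [div_le_one hn1]; exact hγn
    have hqX : ∀ X ∈ (Finset.univ : Finset (Fin n)).powersetCard k,
        pX (μ n) (A n) s X = q n := by
      intro X hX
      have hXc : X.card = k := (Finset.mem_powersetCard.mp hX).2
      have := pX_eq_binom (μ n) (A n) (hmeas n) (hindep n) hp0 hp1
        (hfreq n hγn) s X
      rw [pX, this, hqdef, hXc]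
    have hcount : ∀ X ∈ (Finset.univ : Finset (Fin n)).powersetCard k,
        ∑ Y ∈ (Finset.univ.powersetCard k).filter (fun Y => Y ∩ X ≠ ∅),
          pX (μ n) (A n) s X * pX (μ n) (A n) s Y
        = ((n.choose k - (n-k).choose k : ℕ) : ℝ) * (q n)^2 := by
      intro X hX
      have h1 : ∀ Y ∈ (Finset.univ.powersetCard k).filter
          (fun Y : Finset (Fin n) => Y ∩ X ≠ ∅),
          pX (μ n) (A n) s X * pX (μ n) (A n) s Y = q n * q n := by
        intro Y hY
        rw [hqX X hX, hqX Y (Finset.mem_filter.mp hY).1]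
      rw [Finset.sum_congr rfl h1, Finset.sum_const, count_inter hX, nsmul_eq_mul]
      ring
    rw [b1, Finset.sum_congr rfl hcount, Finset.sum_const,
      Finset.card_powersetCard, Finset.card_univ, Fintype.card_fin, nsmul_eq_mul,
      Nat.cast_sub (Nat.choose_le_choose k (Nat.sub_le n k))]
    rw [hNdef]
    ring
  constructor
  · exact formula
  · -- asymptotics
    have hk1 : (1:ℝ) ≤ (k:ℝ) := by exact_mod_cast (by omega : 1 ≤ k)
    have hck : c < (k:ℝ) := by
      have h1 : (0:ℝ) < 1 / (s:ℝ) := by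
        have : (0:ℝ) < (s:ℝ) := by exact_mod_cast (by omega : 0 < s)
        positivity
      have h2 : (0:ℝ) ≤ (k:ℝ) - 1 := by linarith
      have h3 : ((k:ℝ) - 1) * (1 - 1/(s:ℝ)) ≤ ((k:ℝ) - 1) * 1 := by nlinarith
      nlinarith
    have hqΘ := q_isTheta (k := k) (s := s) (by omega) (by omega) hγ hc0 hck t htΘ
    have hNΘ := N_isTheta (k := k) (by omega : 1 ≤ k)
    have hmul := hNΘ.mul (hqΘ.pow 2)
    have hfe : (fun n => b1 (μ n) (A n) k s) =ᶠ[atTop] (fun n => N n * (q n) ^ 2) := by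
      have hev : ∀ᶠ (n : ℕ) in atTop, γ ≤ (n:ℝ) :=
        (tendsto_natCast_atTop_atTop (R := ℝ)).eventually_ge_atTop γ
      filter_upwards [hev] with n hn
      exact formula n hn
    have heq2 : (fun n : ℕ => ((n:ℝ)) ^ (2*k-1 : ℕ) * (((n:ℝ) ^ (c - (k:ℝ))) ^ s) ^ 2)
        =ᶠ[atTop] (fun n : ℕ =>
          (n : ℝ) ^ (2 * c * (s : ℝ) + 2 * (k : ℝ) * (1 - (s : ℝ)) - 1)) := by
      filter_upwards [eventually_ge_atTop 1] with n hn
      have hn0 : (0:ℝ) < (n:ℝ) := by exact_mod_cast (by omega : 0 < n)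
      have e1 : ((n:ℝ)) ^ (2*k-1 : ℕ) = (n:ℝ) ^ (((2*k-1 : ℕ) : ℝ)) :=
        (Real.rpow_natCast _ _).symm
      have e2 : (((n:ℝ) ^ (c - (k:ℝ))) ^ s) ^ 2 = (n:ℝ) ^ ((c - (k:ℝ)) * (s*2 : ℕ)) := by
        rw [← pow_mul, ← Real.rpow_natCast ((n:ℝ) ^ (c - (k:ℝ))) (s*2),
          ← Real.rpow_mul (le_of_lt hn0)]
      rw [e1, e2, ← Real.rpow_add hn0]
      congr 1
      have : ((2*k-1 : ℕ) : ℝ) = 2*(k:ℝ) - 1 := by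
        have : 1 ≤ 2*k := by omega
        push_cast [Nat.cast_sub this]
        ring
      rw [this]
      push_cast
      ring
    exact hfe.trans_isTheta (hmul.trans_eventuallyEq heq2)

end PaperModel
end
end
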